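/- arXiv:1904.05573 — 5 statements merged into one kernel-verified Lean document; each statement's English description precedes it below -/
import Mathlib

section
/- Fix integers k, K ≥ 1 and let w be a permutation of {1,...,K} lying in the subgroup of S_K generated by all (k+1)-cycles. Then w is 1 mod k if and only if k·ℓ_k(w) = K − cyc(w). -/
/-- `t` is a `(k+1)`-cycle: a single cycle whose support has exactly `k+1` elements. -/
def IsKCycle (k : ℕ) {N : ℕ} (t : Equiv.Perm (Fin N)) : Prop :=
  t.IsCycle ∧ t.support.card = k + 1

/-- `ellK k w` is the minimum number of `(k+1)`-cycles whose product is `w`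
(`0` for the identity, via the empty list). -/
noncomputable def ellK (k : ℕ) {N : ℕ} (w : Equiv.Perm (Fin N)) : ℕ :=
  sInf {m | ∃ l : List (Equiv.Perm (Fin N)),
    l.length = m ∧ (∀ t ∈ l, IsKCycle k t) ∧ l.prod = w}

/-- the `k`-absolute order: `u ≤_k w` iff `ℓ_k(u) + ℓ_k(u⁻¹w) = ℓ_k(w)`. -/
def absLe (k : ℕ) {N : ℕ} (u w : Equiv.Perm (Fin N)) : Prop :=
  ellK k u + ellK k (u⁻¹ * w) = ellK k w

/-- the subgroup of the symmetric group generated by all `(k+1)`-cycles. -/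
def kGenSubgroup (k N : ℕ) : Subgroup (Equiv.Perm (Fin N)) :=
  Subgroup.closure {t | IsKCycle k t}

/-- a permutation is `1 mod k` if all its cycle lengths are congruent to `1` mod `k`
(fixed points, of length `1`, satisfy this automatically). -/
def IsOneModK (k : ℕ) {N : ℕ} (w : Equiv.Perm (Fin N)) : Prop :=
  ∀ l ∈ w.cycleType, l % k = 1 % k

/-- the number of cycles of `w`, counting fixed points as cycles of length 1. -/
def cyc {N : ℕ} (w : Equiv.Perm (Fin N)) : ℕ :=
  w.cycleType.card + (N - w.support.card)

/-- extend a tuple `(u_1, ..., u_q)` by `u_0 = 1` and `u_i = c` for `i > q`. -/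
def chainExt {G : Type*} [One G] (q : ℕ) (c : G) (u : Fin q → G) (i : ℕ) : G :=
  if _h0 : i = 0 then 1 else if h : i ≤ q then u ⟨i - 1, by omega⟩ else c

/-- `(u_1, ..., u_q)` is a `q`-multichain: `u_1 ≤_k u_2 ≤_k ⋯ ≤_k u_q ≤_k c`. -/
def IsMultichainTo (k : ℕ) {N : ℕ} (q : ℕ) (c : Equiv.Perm (Fin N))
    (u : Fin q → Equiv.Perm (Fin N)) : Prop :=
  ∀ i : ℕ, 1 ≤ i → i ≤ q → absLe k (chainExt q c u i) (chainExt q c u (i + 1))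



section KCycProof


open Equiv Equiv.Perm Finset

namespace KCyc
set_option linter.unusedSectionVars false
set_option maxHeartbeats 1000000
variable {α : Type*} [Fintype α] [DecidableEq α]





/-- the `SameCycle`-class of a point, as a finset -/
def cls (u : Equiv.Perm α) (p : α) : Finset α := univ.filter (u.SameCycle p ·)

lemma mem_cls {u : Equiv.Perm α} {p q : α} : q ∈ cls u p ↔ u.SameCycle p q := by
  simp [cls]

lemma self_mem_cls {u : Equiv.Perm α} {p : α} : p ∈ cls u p := mem_cls.mpr Equiv.Perm.SameCycle.rfl

lemma cls_eq_of_sc {u : Equiv.Perm α} {p q : α} (h : u.SameCycle p q) : cls u p = cls u q := by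
  ext z; simp only [mem_cls]
  exact ⟨fun hz => h.symm.trans hz, fun hz => h.trans hz⟩

/-- size of the SameCycle class -/
def clsSize (u : Equiv.Perm α) (p : α) : ℕ := (cls u p).card

lemma clsSize_pos (u : Equiv.Perm α) (p : α) : 0 < clsSize u p :=
  Finset.card_pos.mpr ⟨p, self_mem_cls⟩

lemma clsSize_ne_zero (u : Equiv.Perm α) (p : α) : (clsSize u p : ℚ) ≠ 0 := by
  exact_mod_cast (clsSize_pos u p).ne'

/-- the number of cycles (counting fixed points) as a rational sum over points -/
noncomputable def cycQ (u : Equiv.Perm α) : ℚ := ∑ p, ((clsSize u p : ℚ))⁻¹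

lemma sum_cls_inv (u : Equiv.Perm α) (a : α) :
    ∑ p ∈ cls u a, ((clsSize u p : ℚ))⁻¹ = 1 := by
  have h : ∀ p ∈ cls u a, ((clsSize u p : ℚ))⁻¹ = ((clsSize u a : ℚ))⁻¹ := by
    intro p hp
    rw [clsSize, cls_eq_of_sc (mem_cls.mp hp).symm]; rfl
  rw [Finset.sum_congr rfl h, Finset.sum_const, nsmul_eq_mul]
  show (clsSize u a : ℚ) * _ = 1
  rw [mul_inv_cancel₀ (clsSize_ne_zero u a)]

lemma clsSize_one (p : α) : clsSize (1 : Equiv.Perm α) p = 1 := by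
  have : cls (1 : Equiv.Perm α) p = {p} := by
    ext q; simp [mem_cls, Equiv.Perm.sameCycle_one, eq_comm]
  rw [clsSize, this, Finset.card_singleton]

lemma cycQ_one : cycQ (1 : Equiv.Perm α) = Fintype.card α := by
  simp [cycQ, clsSize_one, Finset.card_univ]





lemma sc_of_pow {f : Equiv.Perm α} {x y : α} (n : ℕ) (h : (f ^ n) x = y) : f.SameCycle x y :=
  ⟨(n : ℤ), by simpa [zpow_natCast] using h⟩

lemma sc_iff_pow {f : Equiv.Perm α} {x y : α} : f.SameCycle x y ↔ ∃ n : ℕ, (f ^ n) x = y := by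
  constructor
  · intro h
    obtain ⟨i, _, hi⟩ := h.exists_pow_eq'
    exact ⟨i, hi⟩
  · rintro ⟨n, h⟩
    exact sc_of_pow n h

lemma mul_swap_apply (u : Equiv.Perm α) (a b z : α) (h1 : z ≠ a) (h2 : z ≠ b) :
    (u * Equiv.swap a b) z = u z := by
  simp [Equiv.Perm.mul_apply, Equiv.swap_apply_of_ne_of_ne h1 h2]

lemma mul_swap_apply_left (u : Equiv.Perm α) (a b : α) :
    (u * Equiv.swap a b) a = u b := by simp [Equiv.Perm.mul_apply]

lemma mul_swap_apply_right (u : Equiv.Perm α) (a b : α) :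
    (u * Equiv.swap a b) b = u a := by simp [Equiv.Perm.mul_apply]

/-- if the `u`-class of `p` avoids `a` and `b` then powers of `u * swap a b` agree with
powers of `u` at `p`. -/
lemma pow_agree {u : Equiv.Perm α} {a b p : α}
    (h : ∀ z, u.SameCycle p z → z ≠ a ∧ z ≠ b) :
    ∀ n : ℕ, ((u * Equiv.swap a b) ^ n) p = (u ^ n) p := by
  intro n
  induction n with
  | zero => rfl
  | succ n ih =>
    rw [pow_succ', Equiv.Perm.mul_apply, ih, pow_succ', Equiv.Perm.mul_apply]
    obtain ⟨h1, h2⟩ := h ((u ^ n) p) (sc_of_pow n rfl)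
    exact mul_swap_apply u a b _ h1 h2

/-- key chain computation: as long as the forward orbit of `a` under `w = u * swap a b`
has not returned to `{a, b}`, it follows the `u`-orbit of `b`. -/
lemma key_chain {u : Equiv.Perm α} {a b : α}
    (hex : ∃ m : ℕ, ((u * Equiv.swap a b) ^ (m + 1)) a = a ∨ ((u * Equiv.swap a b) ^ (m + 1)) a = b) :
    ∀ i ≤ Nat.find hex, ((u * Equiv.swap a b) ^ (i + 1)) a = (u ^ (i + 1)) b := by
  intro i
  induction i with
  | zero =>
    intro _
    simp [pow_one, mul_swap_apply_left]
  | succ n ih =>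
    intro hn
    have hlt : n < Nat.find hex := Nat.lt_of_lt_of_le (Nat.lt_succ_self n) hn
    have hnot := Nat.find_min hex hlt
    push_neg at hnot
    have e := ih hlt.le
    rw [e] at hnot
    rw [pow_succ', Equiv.Perm.mul_apply, e, mul_swap_apply u a b _ hnot.1 hnot.2,
      ← Equiv.Perm.mul_apply, ← pow_succ']

lemma orbit_return {u : Equiv.Perm α} {a b : α} :
    ∃ m : ℕ, ((u * Equiv.swap a b) ^ (m + 1)) a = a ∨ ((u * Equiv.swap a b) ^ (m + 1)) a = b := by
  refine ⟨orderOf (u * Equiv.swap a b) - 1, Or.inl ?_⟩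
  have h1 : 1 ≤ orderOf (u * Equiv.swap a b) := orderOf_pos _
  rw [Nat.sub_add_cancel h1, pow_orderOf_eq_one]
  rfl

/-- Subclaim 1 (merge): if `a`, `b` are in different `u`-cycles then they are in the same
cycle of `u * swap a b`. -/
lemma merge_sc_ab {u : Equiv.Perm α} {a b : α} (h : ¬ u.SameCycle a b) :
    (u * Equiv.swap a b).SameCycle a b := by
  have hex := orbit_return (u := u) (a := a) (b := b)
  have key := key_chain hex (Nat.find hex) le_rfl
  rcases Nat.find_spec hex with hA | hB
  · exfalso
    rw [key] at hA
    exact h (sc_of_pow _ hA).symm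
  · exact sc_of_pow _ hB

/-- periodicity: if `f^m x = x` then `f^j x = f^(j % m) x`. -/
lemma pow_mod_period {f : Equiv.Perm α} {x : α} {m : ℕ} (hm : (f ^ m) x = x) (j : ℕ) :
    (f ^ j) x = (f ^ (j % m)) x := by
  have hmul : ∀ t : ℕ, (f ^ (m * t)) x = x := by
    intro t
    induction t with
    | zero => rfl
    | succ n ih => rw [Nat.mul_succ, pow_add, Equiv.Perm.mul_apply, hm, ih]
  conv_lhs => rw [← Nat.mod_add_div j m, pow_add, Equiv.Perm.mul_apply, hmul]

/-- Subclaim (split): if `a`, `b` are in the same `u`-cycle then they are in different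
cycles of `u * swap a b`. -/
lemma split_not_sc {u : Equiv.Perm α} {a b : α} (hab : a ≠ b) (hsc : u.SameCycle a b) :
    ¬ (u * Equiv.swap a b).SameCycle a b := by
  intro hw
  set w := u * Equiv.swap a b with hwdef
  have hex := orbit_return (u := u) (a := a) (b := b)
  set N := Nat.find hex with hN
  have key := key_chain hex
  rcases Nat.find_spec hex with hA | hB
  · -- w^(N+1) a = a ; then the w-orbit of a avoids b, contradicting hw
    obtain ⟨j, hj⟩ := sc_iff_pow.mp hw
    rw [pow_mod_period hA j] at hj
    have hrlt : j % (N + 1) < N + 1 := Nat.mod_lt _ (Nat.succ_pos N)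
    rcases Nat.eq_zero_or_pos (j % (N + 1)) with h0 | hpos
    · rw [h0] at hj; exact hab hj
    · obtain ⟨i, hi⟩ : ∃ i, j % (N + 1) = i + 1 := ⟨j % (N + 1) - 1, by omega⟩
      rw [hi] at hj
      have hilt : i < N := by omega
      have := Nat.find_min hex hilt
      push_neg at this
      exact this.2 hj
  · -- w^(N+1) a = b, so u^(N+1) b = b; then a is in the u-orbit of b but the chain avoids a
    have hub : (u ^ (N + 1)) b = b := by rw [← key N le_rfl]; exact hB
    obtain ⟨j, hj⟩ := sc_iff_pow.mp hsc.symm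
    rw [pow_mod_period hub j] at hj
    have hrlt : j % (N + 1) < N + 1 := Nat.mod_lt _ (Nat.succ_pos N)
    rcases Nat.eq_zero_or_pos (j % (N + 1)) with h0 | hpos
    · rw [h0] at hj; exact hab hj.symm
    · obtain ⟨i, hi⟩ : ∃ i, j % (N + 1) = i + 1 := ⟨j % (N + 1) - 1, by omega⟩
      rw [hi] at hj
      have hilt : i < N := by omega
      have hmin := Nat.find_min hex hilt
      push_neg at hmin
      exact hmin.1 (by rw [key i hilt.le]; exact hj)



/-- any point in the `u`-orbit of `a` or `b` is in the `(u * swap a b)`-orbit of `a`. -/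
lemma merged_to {u : Equiv.Perm α} {a b : α} (h : ¬ u.SameCycle a b) :
    ∀ z, (u.SameCycle a z ∨ u.SameCycle b z) → (u * Equiv.swap a b).SameCycle a z := by
  set w := u * Equiv.swap a b with hw
  have hstep : ∀ z, w.SameCycle a z → w.SameCycle a (u z) := by
    intro z hz
    rcases eq_or_ne z a with rfl | hza
    · have e : u z = w b := (mul_swap_apply_right u z b).symm
      rw [e]
      exact Equiv.Perm.sameCycle_apply_right.mpr (merge_sc_ab h)
    rcases eq_or_ne z b with rfl | hzb
    · have e : u z = w a := (mul_swap_apply_left u a z).symm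
      rw [e]
      exact Equiv.Perm.sameCycle_apply_right.mpr Equiv.Perm.SameCycle.rfl
    · rw [← mul_swap_apply u a b z hza hzb]
      exact Equiv.Perm.sameCycle_apply_right.mpr hz
  have haux : ∀ (x : α), w.SameCycle a x → ∀ n : ℕ, w.SameCycle a ((u ^ n) x) := by
    intro x hx n
    induction n with
    | zero => exact hx
    | succ n ih =>
      rw [pow_succ', Equiv.Perm.mul_apply]
      exact hstep _ ih
  rintro z (hz | hz)
  · obtain ⟨n, rfl⟩ := sc_iff_pow.mp hz
    exact haux a Equiv.Perm.SameCycle.rfl n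
  · obtain ⟨n, rfl⟩ := sc_iff_pow.mp hz
    exact haux b (merge_sc_ab h) n

/-- untouched classes: if the `u`-class of `p` avoids `a, b`, then the
`(u * swap a b)`-class equals the `u`-class. -/
lemma untouched_sc_iff {u : Equiv.Perm α} {a b p : α}
    (hp : ¬ (u.SameCycle a p ∨ u.SameCycle b p)) (q : α) :
    (u * Equiv.swap a b).SameCycle p q ↔ u.SameCycle p q := by
  push_neg at hp
  have havoid : ∀ z, u.SameCycle p z → z ≠ a ∧ z ≠ b := by
    intro z hz
    constructor
    · rintro rfl; exact hp.1 hz.symm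
    · rintro rfl; exact hp.2 hz.symm
  constructor
  · intro hq
    obtain ⟨n, rfl⟩ := sc_iff_pow.mp hq
    rw [pow_agree havoid n]
    exact sc_of_pow n rfl
  · intro hq
    obtain ⟨n, rfl⟩ := sc_iff_pow.mp hq
    rw [← pow_agree havoid n]
    exact sc_of_pow n rfl

/-- the full description of `SameCycle` for a "merge" multiplication. -/
lemma merge_sc_iff {u : Equiv.Perm α} {a b : α} (h : ¬ u.SameCycle a b) (p q : α) :
    (u * Equiv.swap a b).SameCycle p q ↔
      (u.SameCycle p q ∨ ((u.SameCycle a p ∨ u.SameCycle b p) ∧ (u.SameCycle a q ∨ u.SameCycle b q))) := by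
  set w := u * Equiv.swap a b with hw
  have step : ∀ z : α,
      (u.SameCycle p z ∨ ((u.SameCycle a p ∨ u.SameCycle b p) ∧ (u.SameCycle a z ∨ u.SameCycle b z))) →
      (u.SameCycle p (w z) ∨ ((u.SameCycle a p ∨ u.SameCycle b p) ∧ (u.SameCycle a (w z) ∨ u.SameCycle b (w z)))) := by
    intro z ih
    by_cases hza : z = a
    · subst hza
      have e : w z = u b := mul_swap_apply_left u z b
      rw [e]
      have hpz : u.SameCycle z p ∨ u.SameCycle b p := by
        rcases ih with h1 | ⟨h1, _⟩
        · exact Or.inl h1.symm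
        · exact h1
      exact Or.inr ⟨hpz, Or.inr (Equiv.Perm.sameCycle_apply_right.mpr Equiv.Perm.SameCycle.rfl)⟩
    by_cases hzb : z = b
    · subst hzb
      have e : w z = u a := mul_swap_apply_right u a z
      rw [e]
      have hpz : u.SameCycle a p ∨ u.SameCycle z p := by
        rcases ih with h1 | ⟨h1, _⟩
        · exact Or.inr h1.symm
        · exact h1
      exact Or.inr ⟨hpz, Or.inl (Equiv.Perm.sameCycle_apply_right.mpr Equiv.Perm.SameCycle.rfl)⟩
    · have e : w z = u z := mul_swap_apply u a b z hza hzb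
      rw [e]
      rcases ih with h1 | ⟨h1, h2⟩
      · exact Or.inl (Equiv.Perm.sameCycle_apply_right.mpr h1)
      · refine Or.inr ⟨h1, ?_⟩
        rcases h2 with h2 | h2
        · exact Or.inl (Equiv.Perm.sameCycle_apply_right.mpr h2)
        · exact Or.inr (Equiv.Perm.sameCycle_apply_right.mpr h2)
  constructor
  · intro hpq
    obtain ⟨n, rfl⟩ := sc_iff_pow.mp hpq
    clear hpq
    induction n with
    | zero => exact Or.inl Equiv.Perm.SameCycle.rfl
    | succ n ih =>
      rw [pow_succ', Equiv.Perm.mul_apply]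
      exact step _ ih
  · intro hpq
    by_cases hp : u.SameCycle a p ∨ u.SameCycle b p
    · have hq : u.SameCycle a q ∨ u.SameCycle b q := by
        rcases hpq with h1 | ⟨_, h2⟩
        · rcases hp with h2 | h2
          · exact Or.inl (h2.trans h1)
          · exact Or.inr (h2.trans h1)
        · exact h2
      exact ((merged_to h) p hp).symm.trans ((merged_to h) q hq)
    · have h1 : u.SameCycle p q := by
        rcases hpq with h1 | ⟨h1, _⟩
        · exact h1
        · exact absurd h1 hp
      exact (untouched_sc_iff hp q).mpr h1


lemma merge_cls_merged {u : Equiv.Perm α} {a b : α} (h : ¬ u.SameCycle a b) {p : α}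
    (hp : u.SameCycle a p ∨ u.SameCycle b p) :
    cls (u * Equiv.swap a b) p = cls u a ∪ cls u b := by
  ext q
  simp only [mem_cls, Finset.mem_union]
  rw [merge_sc_iff h p q]
  constructor
  · rintro (h1 | ⟨_, h2⟩)
    · rcases hp with h2 | h2
      · exact Or.inl (h2.trans h1)
      · exact Or.inr (h2.trans h1)
    · exact h2
  · intro hq
    exact Or.inr ⟨hp, hq⟩

lemma merge_cls_untouched {u : Equiv.Perm α} {a b : α} (h : ¬ u.SameCycle a b) {p : α}
    (hp : ¬ (u.SameCycle a p ∨ u.SameCycle b p)) :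
    cls (u * Equiv.swap a b) p = cls u p := by
  ext q
  simp only [mem_cls]
  rw [merge_sc_iff h p q]
  constructor
  · rintro (h1 | ⟨h1, _⟩)
    · exact h1
    · exact absurd h1 hp
  · exact Or.inl

lemma cls_disjoint_of_not_sc {u : Equiv.Perm α} {a b : α} (h : ¬ u.SameCycle a b) :
    Disjoint (cls u a) (cls u b) := by
  rw [Finset.disjoint_left]
  intro q hqa hqb
  exact h ((mem_cls.mp hqa).trans (mem_cls.mp hqb).symm)

lemma merge_clsSize_merged {u : Equiv.Perm α} {a b : α} (h : ¬ u.SameCycle a b) {p : α}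
    (hp : u.SameCycle a p ∨ u.SameCycle b p) :
    clsSize (u * Equiv.swap a b) p = clsSize u a + clsSize u b := by
  rw [clsSize, merge_cls_merged h hp,
    Finset.card_union_of_disjoint (cls_disjoint_of_not_sc h)]
  rfl

lemma merge_clsSize_untouched {u : Equiv.Perm α} {a b : α} (h : ¬ u.SameCycle a b) {p : α}
    (hp : ¬ (u.SameCycle a p ∨ u.SameCycle b p)) :
    clsSize (u * Equiv.swap a b) p = clsSize u p := by
  rw [clsSize, merge_cls_untouched h hp]; rfl

lemma merge_count {u : Equiv.Perm α} {a b : α} (h : ¬ u.SameCycle a b) :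
    cycQ (u * Equiv.swap a b) = cycQ u - 1 := by
  classical
  set w := u * Equiv.swap a b with hwdef
  set C : Finset α := cls u a ∪ cls u b with hC
  have hCcard : (0 : ℚ) < (C.card : ℚ) := by
    have : a ∈ C := Finset.mem_union_left _ self_mem_cls
    exact_mod_cast Finset.card_pos.mpr ⟨a, this⟩
  have h1 : ∑ p ∈ C, ((clsSize w p : ℚ))⁻¹ = 1 := by
    have hcongr : ∀ p ∈ C, ((clsSize w p : ℚ))⁻¹ = ((C.card : ℚ))⁻¹ := by
      intro p hp
      have hp' : u.SameCycle a p ∨ u.SameCycle b p := by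
        rcases Finset.mem_union.mp hp with h' | h'
        · exact Or.inl (mem_cls.mp h')
        · exact Or.inr (mem_cls.mp h')
      rw [clsSize, merge_cls_merged h hp']
    rw [Finset.sum_congr rfl hcongr, Finset.sum_const, nsmul_eq_mul,
      mul_inv_cancel₀ hCcard.ne']
  have h2 : ∑ p ∈ C, ((clsSize u p : ℚ))⁻¹ = 2 := by
    rw [hC, Finset.sum_union (cls_disjoint_of_not_sc h), sum_cls_inv, sum_cls_inv]
    norm_num
  have h3 : ∑ p ∈ Cᶜ, ((clsSize w p : ℚ))⁻¹ = ∑ p ∈ Cᶜ, ((clsSize u p : ℚ))⁻¹ := by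
    refine Finset.sum_congr rfl ?_
    intro p hp
    have hp0 : p ∉ C := Finset.mem_compl.mp hp
    have hp' : ¬ (u.SameCycle a p ∨ u.SameCycle b p) := by
      intro hcon
      apply hp0
      rcases hcon with h' | h'
      · exact Finset.mem_union_left _ (mem_cls.mpr h')
      · exact Finset.mem_union_right _ (mem_cls.mpr h')
    rw [merge_clsSize_untouched h hp']
  have e1 : cycQ w = (∑ p ∈ C, ((clsSize w p : ℚ))⁻¹) + ∑ p ∈ Cᶜ, ((clsSize w p : ℚ))⁻¹ :=
    (Finset.sum_add_sum_compl C _).symm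
  have e2 : cycQ u = (∑ p ∈ C, ((clsSize u p : ℚ))⁻¹) + ∑ p ∈ Cᶜ, ((clsSize u p : ℚ))⁻¹ :=
    (Finset.sum_add_sum_compl C _).symm
  rw [e1, e2, h1, h2, h3]
  ring

lemma split_count {u : Equiv.Perm α} {a b : α} (hab : a ≠ b) (hsc : u.SameCycle a b) :
    cycQ (u * Equiv.swap a b) = cycQ u + 1 := by
  have h2 := split_not_sc hab hsc
  have h3 := merge_count h2
  have h4 : u * Equiv.swap a b * Equiv.swap a b = u := by
    rw [mul_assoc, Equiv.swap_mul_self, mul_one]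
  rw [h4] at h3
  linarith

lemma swap_step {u : Equiv.Perm α} {a b : α} (hab : a ≠ b) :
    cycQ (u * Equiv.swap a b) = cycQ u - 1 ∨ cycQ (u * Equiv.swap a b) = cycQ u + 1 := by
  by_cases h : u.SameCycle a b
  · exact Or.inr (split_count hab h)
  · exact Or.inl (merge_count h)


lemma bound_list (l : List α) : ∀ v : Equiv.Perm α,
    cycQ v - ((l.length - 1 : ℕ) : ℚ) ≤ cycQ (v * l.formPerm) := by
  induction l with
  | nil => intro v; simp [List.formPerm_nil]
  | cons x l ih =>
    intro v
    cases l with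
    | nil => simp [List.formPerm_singleton]
    | cons y l' =>
      have hsplit : v * (x :: y :: l').formPerm = (v * Equiv.swap x y) * (y :: l').formPerm := by
        rw [List.formPerm_cons_cons, ← mul_assoc]
      rw [hsplit]
      have hb := ih (v * Equiv.swap x y)
      have hlen1 : (((x :: y :: l').length - 1 : ℕ) : ℚ) = (l'.length : ℚ) + 1 := by
        simp [List.length_cons]
      have hlen2 : (((y :: l').length - 1 : ℕ) : ℚ) = (l'.length : ℚ) := by
        simp [List.length_cons]
      rw [hlen2] at hb
      rw [hlen1]
      rcases eq_or_ne x y with rfl | hxy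
      · have hswap : Equiv.swap x x = (1 : Equiv.Perm α) := Equiv.swap_self x
        rw [hswap, mul_one] at hb
        rw [hswap, mul_one]
        linarith
      · rcases swap_step (u := v) hxy with h | h <;> linarith

lemma left_main : ∀ (l : List α), l.Nodup → l ≠ [] → ∀ v : Equiv.Perm α,
    cycQ (v * l.formPerm) = cycQ v - ((l.length - 1 : ℕ) : ℚ) →
    (∀ p ∈ l, ∀ q ∈ l, p ≠ q → ¬ v.SameCycle p q) ∧
    ((∀ p, (∃ a ∈ l, v.SameCycle a p) → clsSize (v * l.formPerm) p = (l.map (clsSize v)).sum) ∧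
     (∀ p, ¬(∃ a ∈ l, v.SameCycle a p) → clsSize (v * l.formPerm) p = clsSize v p)) ∧
    (∀ p q, (v * l.formPerm).SameCycle p q ↔
      (v.SameCycle p q ∨ ((∃ a ∈ l, v.SameCycle a p) ∧ (∃ a ∈ l, v.SameCycle a q)))) := by
  intro l
  induction l with
  | nil => intro _ h; exact absurd rfl h
  | cons x l ih =>
    intro hnd _ v hE
    cases l with
    | nil =>
      simp only [List.formPerm_singleton, mul_one] at *
      refine ⟨?_, ⟨?_, ?_⟩, ?_⟩
      · intro p hp q hq hne
        rw [List.mem_singleton] at hp hq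
        exact absurd (hp.trans hq.symm) hne
      · intro p hp
        obtain ⟨a, ha, hap⟩ := hp
        rw [List.mem_singleton] at ha
        subst ha
        simp only [List.map_cons, List.map_nil, List.sum_cons, List.sum_nil, add_zero]
        rw [clsSize, cls_eq_of_sc hap.symm]
        rfl
      · intro p _; trivial
      · intro p q
        constructor
        · exact Or.inl
        · rintro (h1 | ⟨⟨a, ha, h1⟩, ⟨a', ha', h2⟩⟩)
          · exact h1
          · rw [List.mem_singleton] at ha ha'
            subst ha; subst ha'
            exact h1.symm.trans h2
    | cons y l' =>
      -- extract nodup facts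
      have hxy : x ≠ y := by
        intro h; subst h
        exact (List.nodup_cons.mp hnd).1 (List.mem_cons_self)
      have hxl' : x ∉ l' := fun h =>
        (List.nodup_cons.mp hnd).1 (List.mem_cons_of_mem _ h)
      have hyl' : y ∉ l' := (List.nodup_cons.mp ((List.nodup_cons.mp hnd).2)).1
      have hnd' : (y :: l').Nodup := (List.nodup_cons.mp hnd).2
      set v' := v * Equiv.swap x y with hv'
      have hsplit : v * (x :: y :: l').formPerm = v' * (y :: l').formPerm := by
        rw [List.formPerm_cons_cons, ← mul_assoc]
      have hc1 : (((x :: y :: l').length - 1 : ℕ) : ℚ) = (l'.length : ℚ) + 1 := by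
        simp [List.length_cons]
      have hc2 : (((y :: l').length - 1 : ℕ) : ℚ) = (l'.length : ℚ) := by
        simp [List.length_cons]
      rw [hsplit, hc1] at hE
      have B1 := bound_list (y :: l') v'
      rw [hc2] at B1
      have hdelta : cycQ v' = cycQ v - 1 := by
        rcases swap_step (u := v) hxy with h | h
        · exact h
        · exfalso; rw [hv'] at *; linarith
      have hmerge : ¬ v.SameCycle x y := by
        intro hcon
        have := split_count hxy hcon
        rw [← hv'] at this
        linarith
      have M := merge_sc_iff hmerge
      have hE' : cycQ (v' * (y :: l').formPerm) = cycQ v' - (((y :: l').length - 1 : ℕ) : ℚ) := by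
        rw [hc2]; linarith
      obtain ⟨IH1, ⟨IH2a, IH2b⟩, IH3⟩ := ih hnd' (List.cons_ne_nil _ _) v' hE'
      -- basic transfer facts
      have f1 : ∀ q, v.SameCycle x q → v'.SameCycle y q := fun q hq =>
        (M y q).mpr (Or.inr ⟨Or.inr Equiv.Perm.SameCycle.rfl, Or.inl hq⟩)
      have i2 : ∀ a ∈ l', ¬ v.SameCycle x a := by
        intro a ha hcon
        exact IH1 y (List.mem_cons_self) a (List.mem_cons_of_mem _ ha)
          (fun h => hyl' (h ▸ ha)) (f1 a hcon)
      have i3 : ∀ a ∈ l', ¬ v.SameCycle y a := by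
        intro a ha hcon
        exact IH1 y (List.mem_cons_self) a (List.mem_cons_of_mem _ ha)
          (fun h => hyl' (h ▸ ha)) ((M y a).mpr (Or.inl hcon))
      have i4 : ∀ a ∈ l', ∀ b ∈ l', a ≠ b → ¬ v.SameCycle a b := by
        intro a ha b hb hne hcon
        exact IH1 a (List.mem_cons_of_mem _ ha) b (List.mem_cons_of_mem _ hb) hne
          ((M a b).mpr (Or.inl hcon))
      -- part (i)
      have part1 : ∀ p ∈ x :: y :: l', ∀ q ∈ x :: y :: l', p ≠ q → ¬ v.SameCycle p q := by
        intro p hp q hq hne hcon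
        rcases List.mem_cons.mp hp with rfl | hp'
        · rcases List.mem_cons.mp hq with rfl | hq'
          · exact hne rfl
          · rcases List.mem_cons.mp hq' with rfl | hq''
            · exact hmerge hcon
            · exact i2 q hq'' hcon
        · rcases List.mem_cons.mp hp' with rfl | hp''
          · rcases List.mem_cons.mp hq with rfl | hq'
            · exact hmerge hcon.symm
            · rcases List.mem_cons.mp hq' with rfl | hq''
              · exact hne rfl
              · exact i3 q hq'' hcon
          · rcases List.mem_cons.mp hq with rfl | hq'
            · exact i2 p hp'' hcon.symm
            · rcases List.mem_cons.mp hq' with rfl | hq''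
              · exact i3 p hp'' hcon.symm
              · exact i4 p hp'' q hq'' hne hcon
      -- the condition transfer
      have EL : ∀ p, (∃ a ∈ y :: l', v'.SameCycle a p) ↔ (∃ a ∈ x :: y :: l', v.SameCycle a p) := by
        intro p
        constructor
        · rintro ⟨a, ha, hap⟩
          rcases List.mem_cons.mp ha with rfl | ha'
          · rcases (M a p).mp hap with h1 | ⟨_, h2⟩
            · exact ⟨a, List.mem_cons_of_mem _ (List.mem_cons_self), h1⟩
            · rcases h2 with h2 | h2
              · exact ⟨x, List.mem_cons_self, h2⟩
              · exact ⟨a, List.mem_cons_of_mem _ (List.mem_cons_self), h2⟩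
          · rcases (M a p).mp hap with h1 | ⟨h2, _⟩
            · exact ⟨a, List.mem_cons_of_mem _ (List.mem_cons_of_mem _ ha'), h1⟩
            · rcases h2 with h2 | h2
              · exact absurd h2 (i2 a ha')
              · exact absurd h2 (i3 a ha')
        · rintro ⟨a, ha, hap⟩
          rcases List.mem_cons.mp ha with rfl | ha'
          · exact ⟨y, List.mem_cons_self, f1 p hap⟩
          · rcases List.mem_cons.mp ha' with rfl | ha''
            · exact ⟨a, List.mem_cons_self, (M a p).mpr (Or.inl hap)⟩
            · exact ⟨a, List.mem_cons_of_mem _ ha'', (M a p).mpr (Or.inl hap)⟩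
      -- class sizes transfer
      have sy : clsSize v' y = clsSize v x + clsSize v y :=
        merge_clsSize_merged hmerge (Or.inr Equiv.Perm.SameCycle.rfl)
      have sa : ∀ a ∈ l', clsSize v' a = clsSize v a := by
        intro a ha
        refine merge_clsSize_untouched hmerge ?_
        rintro (h | h)
        · exact i2 a ha h
        · exact i3 a ha h
      have hsum : ((y :: l').map (clsSize v')).sum = ((x :: y :: l').map (clsSize v)).sum := by
        simp only [List.map_cons, List.sum_cons, sy]
        rw [List.map_congr_left sa]
        omega
      refine ⟨part1, ⟨?_, ?_⟩, ?_⟩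
      · intro p hp
        have hp' := (EL p).mpr hp
        rw [hsplit, IH2a p hp']
        exact hsum
      · intro p hp
        have hp' : ¬ (∃ a ∈ y :: l', v'.SameCycle a p) := fun h => hp ((EL p).mp h)
        rw [hsplit, IH2b p hp']
        refine merge_clsSize_untouched hmerge ?_
        rintro (h | h)
        · exact hp ⟨x, List.mem_cons_self, h⟩
        · exact hp ⟨y, List.mem_cons_of_mem _ (List.mem_cons_self), h⟩
      · intro p q
        rw [hsplit, IH3 p q]
        constructor
        · rintro (h1 | ⟨hp, hq⟩)
          · rcases (M p q).mp h1 with h2 | ⟨h2, h3⟩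
            · exact Or.inl h2
            · refine Or.inr ⟨?_, ?_⟩
              · rcases h2 with h2 | h2
                · exact ⟨x, List.mem_cons_self, h2⟩
                · exact ⟨y, List.mem_cons_of_mem _ (List.mem_cons_self), h2⟩
              · rcases h3 with h3 | h3
                · exact ⟨x, List.mem_cons_self, h3⟩
                · exact ⟨y, List.mem_cons_of_mem _ (List.mem_cons_self), h3⟩
          · exact Or.inr ⟨(EL p).mp hp, (EL q).mp hq⟩
        · rintro (h1 | ⟨hp, hq⟩)
          · exact Or.inl ((M p q).mpr (Or.inl h1))
          · exact Or.inr ⟨(EL p).mpr hp, (EL q).mpr hq⟩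

lemma cls_eq_support_cycleOf {w : Equiv.Perm α} {p : α} (hp : p ∈ w.support) :
    cls w p = (w.cycleOf p).support := by
  ext q
  rw [mem_cls, Equiv.Perm.mem_support_cycleOf_iff]
  exact ⟨fun h => ⟨h, hp⟩, fun h => h.1⟩

lemma cls_of_fixed {w : Equiv.Perm α} {p : α} (hp : p ∉ w.support) : cls w p = {p} := by
  ext q
  simp only [mem_cls, Finset.mem_singleton]
  constructor
  · intro h
    exact (h.eq_of_left (Equiv.Perm.notMem_support.mp hp)).symm
  · rintro rfl
    exact Equiv.Perm.SameCycle.rfl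

lemma cycleType_card_eq (w : Equiv.Perm α) :
    Multiset.card w.cycleType = w.cycleFactorsFinset.card := by
  rw [Equiv.Perm.cycleType_def, Multiset.card_map]
  rfl

lemma cycQ_eq_cyc (w : Equiv.Perm α) :
    cycQ w = (Multiset.card w.cycleType : ℚ) + ((Fintype.card α - w.support.card : ℕ) : ℚ) := by
  have h2 : ∑ p ∈ w.supportᶜ, ((clsSize w p : ℚ))⁻¹ = ((Fintype.card α - w.support.card : ℕ) : ℚ) := by
    have hcon : ∀ p ∈ w.supportᶜ, ((clsSize w p : ℚ))⁻¹ = 1 := by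
      intro p hp
      rw [clsSize, cls_of_fixed (Finset.mem_compl.mp hp), Finset.card_singleton]
      norm_num
    rw [Finset.sum_congr rfl hcon, Finset.sum_const, Finset.card_compl]
    simp
  have h1 : ∑ p ∈ w.support, ((clsSize w p : ℚ))⁻¹ = (Multiset.card w.cycleType : ℚ) := by
    have hmaps : ∀ p ∈ w.support, w.cycleOf p ∈ w.cycleFactorsFinset := fun p hp =>
      Equiv.Perm.cycleOf_mem_cycleFactorsFinset_iff.mpr hp
    rw [← Finset.sum_fiberwise_of_maps_to hmaps]
    have hfib : ∀ c ∈ w.cycleFactorsFinset,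
        ∑ p ∈ w.support.filter (fun p => w.cycleOf p = c), ((clsSize w p : ℚ))⁻¹ = 1 := by
      intro c hc
      have hsub : c.support ⊆ w.support := Equiv.Perm.mem_cycleFactorsFinset_support_le hc
      have hfil : w.support.filter (fun p => w.cycleOf p = c) = c.support := by
        ext p
        simp only [Finset.mem_filter]
        constructor
        · rintro ⟨hp, hcp⟩
          rw [← hcp, Equiv.Perm.mem_support_cycleOf_iff]
          exact ⟨Equiv.Perm.SameCycle.rfl, hp⟩
        · intro hp
          exact ⟨hsub hp, (Equiv.Perm.cycle_is_cycleOf hp hc).symm⟩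
      rw [hfil]
      have hterm : ∀ p ∈ c.support, ((clsSize w p : ℚ))⁻¹ = ((c.support.card : ℚ))⁻¹ := by
        intro p hp
        rw [clsSize, cls_eq_support_cycleOf (hsub hp), ← Equiv.Perm.cycle_is_cycleOf hp hc]
      have hcard : (0:ℚ) < (c.support.card : ℚ) := by
        exact_mod_cast Finset.card_pos.mpr
          (Equiv.Perm.mem_cycleFactorsFinset_iff.mp hc).1.nonempty_support
      rw [Finset.sum_congr rfl hterm, Finset.sum_const, nsmul_eq_mul, mul_inv_cancel₀ hcard.ne']
    rw [Finset.sum_congr rfl hfib, Finset.sum_const, nsmul_eq_mul, mul_one, cycleType_card_eq]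
  rw [cycQ, ← Finset.sum_add_sum_compl w.support, h1, h2]

lemma onemod_iff (k : ℕ) (w : Equiv.Perm α) :
    (∀ l ∈ w.cycleType, l % k = 1 % k) ↔ (∀ p, clsSize w p % k = 1 % k) := by
  constructor
  · intro h p
    by_cases hp : p ∈ w.support
    · have he : clsSize w p = (w.cycleOf p).support.card := by
        rw [clsSize, cls_eq_support_cycleOf hp]
      rw [he]
      apply h
      rw [Equiv.Perm.cycleType_def]
      exact Multiset.mem_map.mpr
        ⟨w.cycleOf p, Equiv.Perm.cycleOf_mem_cycleFactorsFinset_iff.mpr hp, rfl⟩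
    · rw [clsSize, cls_of_fixed hp, Finset.card_singleton]
  · intro h l hl
    rw [Equiv.Perm.cycleType_def] at hl
    obtain ⟨c, hc, rfl⟩ := Multiset.mem_map.mp hl
    have hc' : c ∈ w.cycleFactorsFinset := hc
    obtain ⟨p, hp⟩ := (Equiv.Perm.mem_cycleFactorsFinset_iff.mp hc').1.nonempty_support
    have hh := h p
    rw [clsSize, cls_eq_support_cycleOf (Equiv.Perm.mem_cycleFactorsFinset_support_le hc' hp),
      ← Equiv.Perm.cycle_is_cycleOf hp hc'] at hh
    exact hh

lemma formPerm_take_drop : ∀ (j : ℕ), 0 < j → ∀ (l : List α), j + 1 ≤ l.length →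
    l.formPerm = (l.take (j + 1)).formPerm * (l.drop j).formPerm := by
  intro j
  induction j with
  | zero => intro h; omega
  | succ n ih =>
    intro _ l hlen
    match l, hlen with
    | x :: y :: r, hlen =>
      cases n with
      | zero =>
        show (x :: y :: r).formPerm = ((x :: y :: r).take 2).formPerm * ((x :: y :: r).drop 1).formPerm
        rw [List.formPerm_cons_cons]
        have h2 : (x :: y :: r).take 2 = [x, y] := rfl
        have h1 : (x :: y :: r).drop 1 = y :: r := rfl
        rw [h2, h1, List.formPerm_pair]
      | succ m =>
        have hlen' : m + 1 + 1 ≤ (y :: r).length := by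
          simp only [List.length_cons] at hlen ⊢
          omega
        have IH := ih (Nat.succ_pos m) (y :: r) hlen'
        have ht1 : (x :: y :: r).take (m + 1 + 1 + 1) = x :: ((y :: r).take (m + 1 + 1)) := rfl
        have ht2 : (y :: r).take (m + 1 + 1) = y :: (r.take (m + 1)) := rfl
        have hd1 : (x :: y :: r).drop (m + 1 + 1) = (y :: r).drop (m + 1) := rfl
        rw [List.formPerm_cons_cons, IH, ← mul_assoc, ht1, ht2, ← List.formPerm_cons_cons, ← ht2, hd1]

lemma fp_split (k : ℕ) (hk : 1 ≤ k) : ∀ (m : ℕ) (l : List α), l.Nodup → l.length = m * k + 1 →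
    ∃ L : List (Equiv.Perm α), (∀ t ∈ L, t.IsCycle ∧ t.support.card = k + 1) ∧
      L.length = m ∧ L.prod = l.formPerm := by
  intro m
  induction m with
  | zero =>
    intro l hnd hlen
    simp only [Nat.zero_mul, Nat.zero_add] at hlen
    obtain ⟨x, rfl⟩ := List.length_eq_one_iff.mp hlen
    exact ⟨[], by simp, rfl, by simp [List.formPerm_singleton]⟩
  | succ m ih =>
    intro l hnd hlen
    have hklen : k + 1 ≤ l.length := by
      rw [hlen]; nlinarith
    have hsplit := formPerm_take_drop k hk l hklen
    have hA_len : (l.take (k + 1)).length = k + 1 := by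
      rw [List.length_take]; omega
    have hB_len : (l.drop k).length = m * k + 1 := by
      rw [List.length_drop, hlen]
      have hmm : (m + 1) * k = m * k + k := by ring
      omega
    have hA_nd : (l.take (k + 1)).Nodup := hnd.sublist (List.take_sublist _ _)
    have hB_nd : (l.drop k).Nodup := hnd.sublist (List.drop_sublist _ _)
    obtain ⟨L, hL1, hL2, hL3⟩ := ih (l.drop k) hB_nd hB_len
    refine ⟨(l.take (k + 1)).formPerm :: L, ?_, by simp [hL2],
      by rw [List.prod_cons, hL3, hsplit]⟩
    intro t ht
    rcases List.mem_cons.mp ht with rfl | ht'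
    · constructor
      · exact List.isCycle_formPerm hA_nd (by omega)
      · have hns : ∀ x, l.take (k + 1) ≠ [x] := by
          intro x hx
          rw [hx] at hA_len
          simp at hA_len
          omega
        rw [List.support_formPerm_of_nodup _ hA_nd hns, List.toFinset_card_of_nodup hA_nd, hA_len]
    · exact hL1 t ht'

lemma cycle_split (k : ℕ) (hk : 1 ≤ k) {c : Equiv.Perm α} (hc : c.IsCycle)
    (hmod : c.support.card % k = 1 % k) :
    ∃ L : List (Equiv.Perm α), (∀ t ∈ L, t.IsCycle ∧ t.support.card = k + 1) ∧
      k * L.length + 1 = c.support.card ∧ L.prod = c := by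
  obtain ⟨x, hx⟩ := hc.nonempty_support
  have hxs : c x ≠ x := Equiv.Perm.mem_support.mp hx
  have hcyc : c.cycleOf x = c := hc.cycleOf_eq hxs
  have hlen : (c.toList x).length = c.support.card := by
    rw [Equiv.Perm.length_toList, hcyc]
  have hge : 1 ≤ c.support.card := le_trans one_le_two hc.two_le_card_support
  have hdvd : k ∣ c.support.card - 1 := (Nat.modEq_iff_dvd' hge).mp hmod.symm
  obtain ⟨m, hm⟩ := hdvd
  have hcard : c.support.card = m * k + 1 := by
    rw [Nat.mul_comm m k]; omega
  obtain ⟨L, h1, h2, h3⟩ := fp_split k hk m (c.toList x) (Equiv.Perm.nodup_toList c x)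
    (by rw [hlen, hcard])
  refine ⟨L, h1, by rw [h2, hcard, Nat.mul_comm], ?_⟩
  rw [h3, Equiv.Perm.formPerm_toList, hcyc]

lemma decomp (k : ℕ) (hk : 1 ≤ k) (w : Equiv.Perm α) :
    (∀ l ∈ w.cycleType, l % k = 1 % k) →
    ∃ L : List (Equiv.Perm α), (∀ t ∈ L, t.IsCycle ∧ t.support.card = k + 1) ∧
      k * L.length + Multiset.card w.cycleType = w.support.card ∧ L.prod = w := by
  induction w using Equiv.Perm.cycle_induction_on with
  | base_one =>
    intro _
    exact ⟨[], by simp, by simp, rfl⟩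
  | base_cycles σ hσ =>
    intro h
    have hmod : σ.support.card % k = 1 % k := by
      apply h
      rw [hσ.cycleType]
      simp
    obtain ⟨L, h1, h2, h3⟩ := cycle_split k hk hσ hmod
    refine ⟨L, h1, ?_, h3⟩
    rw [hσ.cycleType]
    simpa using h2
  | induction_disjoint σ τ hd hσ ihσ ihτ =>
    intro h
    rw [Equiv.Perm.Disjoint.cycleType_mul hd] at h
    obtain ⟨L1, hL11, hL12, hL13⟩ := ihσ (fun l hl => h l (Multiset.mem_add.mpr (Or.inl hl)))
    obtain ⟨L2, hL21, hL22, hL23⟩ := ihτ (fun l hl => h l (Multiset.mem_add.mpr (Or.inr hl)))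
    refine ⟨L1 ++ L2, ?_, ?_, by rw [List.prod_append, hL13, hL23]⟩
    · intro t ht
      rcases List.mem_append.mp ht with ht' | ht'
      · exact hL11 t ht'
      · exact hL21 t ht'
    · rw [Equiv.Perm.Disjoint.cycleType_mul hd, Equiv.Perm.Disjoint.card_support_mul hd]
      simp only [List.length_append, Multiset.card_add]
      rw [Nat.mul_add]
      omega

lemma bound_cycle (v t : Equiv.Perm α) (ht : t.IsCycle) :
    cycQ v - ((t.support.card - 1 : ℕ) : ℚ) ≤ cycQ (v * t) := by
  obtain ⟨x, hx⟩ := ht.nonempty_support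
  have hcyc : t.cycleOf x = t := ht.cycleOf_eq (Equiv.Perm.mem_support.mp hx)
  have hfp : (t.toList x).formPerm = t := by rw [Equiv.Perm.formPerm_toList, hcyc]
  have hlen : (t.toList x).length = t.support.card := by rw [Equiv.Perm.length_toList, hcyc]
  have hb := bound_list (t.toList x) v
  rw [hfp, hlen] at hb
  exact hb

lemma bound_prod (k : ℕ) : ∀ L : List (Equiv.Perm α),
    (∀ t ∈ L, t.IsCycle ∧ t.support.card = k + 1) →
    (Fintype.card α : ℚ) - k * L.length ≤ cycQ L.prod := by
  intro L
  induction L using List.reverseRecOn with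
  | nil => intro _; simp [cycQ_one]
  | append_singleton L t ih =>
    intro h
    have h1 := ih (fun s hs => h s (List.mem_append.mpr (Or.inl hs)))
    have ht := h t (List.mem_append.mpr (Or.inr (List.mem_singleton_self t)))
    have h2 := bound_cycle L.prod t ht.1
    rw [ht.2] at h2
    have hc : ((k + 1 - 1 : ℕ) : ℚ) = (k : ℚ) := by simp
    rw [hc] at h2
    have hp : (L ++ [t]).prod = L.prod * t := by simp
    have hl : ((L ++ [t]).length : ℚ) = (L.length : ℚ) + 1 := by
      simp
    rw [hp, hl]
    linarith

lemma list_sum_mod (k : ℕ) : ∀ (L : List ℕ), (∀ c ∈ L, c % k = 1 % k) →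
    L.sum % k = L.length % k := by
  intro L
  induction L with
  | nil => intro _; rfl
  | cons c L ih =>
    intro h
    have h1 : c % k = 1 % k := h c (List.mem_cons_self)
    have h2 := ih (fun d hd => h d (List.mem_cons_of_mem _ hd))
    show (c + L.sum) % k = (L.length + 1) % k
    have hmod : (c + L.sum) ≡ (1 + L.length) [MOD k] := Nat.ModEq.add h1 h2
    rw [Nat.add_comm L.length 1]; exact hmod

lemma step_onemod (k : ℕ) (hk : 1 ≤ k) {u t : Equiv.Perm α}
    (ht : t.IsCycle ∧ t.support.card = k + 1)
    (hu : ∀ p, clsSize u p % k = 1 % k) (hc : cycQ (u * t) = cycQ u - (k : ℚ)) :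
    ∀ p, clsSize (u * t) p % k = 1 % k := by
  obtain ⟨x, hx⟩ := ht.1.nonempty_support
  have hcyc : t.cycleOf x = t := ht.1.cycleOf_eq (Equiv.Perm.mem_support.mp hx)
  have hnd := Equiv.Perm.nodup_toList t x
  have hfp : (t.toList x).formPerm = t := by rw [Equiv.Perm.formPerm_toList, hcyc]
  have hlen : (t.toList x).length = k + 1 := by rw [Equiv.Perm.length_toList, hcyc, ht.2]
  have hne : t.toList x ≠ [] := by
    intro h
    rw [h] at hlen
    simp at hlen
  have hE : cycQ (u * (t.toList x).formPerm) = cycQ u - (((t.toList x).length - 1 : ℕ) : ℚ) := by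
    rw [hfp, hlen]
    simpa using hc
  obtain ⟨_, ⟨H2a, H2b⟩, _⟩ := left_main (t.toList x) hnd hne u hE
  intro p
  rw [← hfp]
  by_cases hp : ∃ a ∈ t.toList x, u.SameCycle a p
  · rw [H2a p hp]
    have hall : ∀ c ∈ (t.toList x).map (clsSize u), c % k = 1 % k := by
      intro c hcmem
      obtain ⟨a, _, rfl⟩ := List.mem_map.mp hcmem
      exact hu a
    rw [list_sum_mod k _ hall, List.length_map, hlen]
    exact Nat.add_mod_left k 1
  · rw [H2b p hp]
    exact hu p

lemma listeq (k : ℕ) (hk : 1 ≤ k) : ∀ L : List (Equiv.Perm α),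
    (∀ t ∈ L, t.IsCycle ∧ t.support.card = k + 1) →
    ((Fintype.card α : ℚ) - cycQ L.prod = k * L.length) →
    ∀ p, clsSize L.prod p % k = 1 % k := by
  intro L
  induction L using List.reverseRecOn with
  | nil =>
    intro _ _ p
    simp only [List.prod_nil, clsSize_one]
  | append_singleton L t ih =>
    intro hall heq
    have ht := hall t (List.mem_append.mpr (Or.inr (List.mem_singleton_self t)))
    have hLall : ∀ s ∈ L, s.IsCycle ∧ s.support.card = k + 1 :=
      fun s hs => hall s (List.mem_append.mpr (Or.inl hs))
    have hb1 := bound_prod k L hLall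
    have hb2 := bound_cycle L.prod t ht.1
    rw [ht.2] at hb2
    have hcast : ((k + 1 - 1 : ℕ) : ℚ) = (k : ℚ) := by simp
    rw [hcast] at hb2
    have hp : (L ++ [t]).prod = L.prod * t := by simp
    have hl : ((L ++ [t]).length : ℚ) = (L.length : ℚ) + 1 := by simp
    rw [hp, hl] at heq
    have e1 : (Fintype.card α : ℚ) - cycQ L.prod = k * L.length := by linarith
    have e2 : cycQ (L.prod * t) = cycQ L.prod - (k : ℚ) := by linarith
    have ihp := ih hLall e1
    rw [hp]
    exact step_onemod k hk ht ihp e2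

end KCyc

end KCycProof

/-- Lemma 2.2: `w` is `1 mod k` if and only if `k * ℓ_k(w) = K - cyc(w)`. -/
theorem one_mod_k_iff_length (k K : ℕ) (hk : 1 ≤ k) (hK : 1 ≤ K)
    (w : Equiv.Perm (Fin K)) (hw : w ∈ kGenSubgroup k K) :
    IsOneModK k w ↔ (k : ℤ) * ellK k w = (K : ℤ) - cyc w := by
  classical
  -- existence of a factorization into (k+1)-cycles
  have hex : ∃ l : List (Equiv.Perm (Fin K)), (∀ t ∈ l, IsKCycle k t) ∧ l.prod = w := by
    refine Subgroup.closure_induction ?_ ?_ ?_ ?_ hw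
    · intro t ht
      exact ⟨[t], by simpa using ht, by simp⟩
    · exact ⟨[], by simp, by simp⟩
    · rintro a b _ _ ⟨la, h1, h2⟩ ⟨lb, h3, h4⟩
      refine ⟨la ++ lb, ?_, by rw [List.prod_append, h2, h4]⟩
      intro t ht
      rcases List.mem_append.mp ht with h | h
      · exact h1 t h
      · exact h3 t h
    · rintro a _ ⟨la, h1, h2⟩
      refine ⟨(la.map (fun s => s⁻¹)).reverse, ?_, by rw [← h2, ← List.prod_inv_reverse]⟩
      intro t ht
      rw [List.mem_reverse, List.mem_map] at ht
      obtain ⟨s, hs, rfl⟩ := ht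
      obtain ⟨hc, hcard⟩ := h1 s hs
      exact ⟨hc.inv, by rwa [Equiv.Perm.support_inv]⟩
  obtain ⟨lw, hlw1, hlw2⟩ := hex
  have hSne : {m | ∃ l : List (Equiv.Perm (Fin K)),
      l.length = m ∧ (∀ t ∈ l, IsKCycle k t) ∧ l.prod = w}.Nonempty :=
    ⟨lw.length, lw, rfl, hlw1, hlw2⟩
  have hmem := Nat.sInf_mem hSne
  obtain ⟨l₀, hl₀len, hl₀k, hl₀prod⟩ := hmem
  have hellK : l₀.length = ellK k w := hl₀len
  have hl₀' : ∀ t ∈ l₀, t.IsCycle ∧ t.support.card = k + 1 := fun t ht => hl₀k t ht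
  have hcardα : Fintype.card (Fin K) = K := Fintype.card_fin K
  have hsupple : w.support.card ≤ K := by
    have h := Finset.card_le_univ w.support
    rwa [hcardα] at h
  have hcyc_cast : (cyc w : ℚ) = (Multiset.card w.cycleType : ℚ) + ((K : ℚ) - w.support.card) := by
    show ((Multiset.card w.cycleType + (K - w.support.card) : ℕ) : ℚ) = _
    rw [Nat.cast_add, Nat.cast_sub hsupple]
  have hcyc_eq : (cyc w : ℚ) = KCyc.cycQ w := by
    have h := KCyc.cycQ_eq_cyc w
    rw [hcardα] at h
    rw [h, hcyc_cast, Nat.cast_sub hsupple]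
  have hlow : (K : ℚ) - KCyc.cycQ w ≤ (k : ℚ) * (ellK k w) := by
    have h := KCyc.bound_prod k l₀ hl₀'
    rw [hl₀prod, hcardα, hellK] at h
    linarith
  constructor
  · intro h1
    obtain ⟨L, hL1, hL2, hL3⟩ := KCyc.decomp k hk w h1
    have hup : ellK k w ≤ L.length :=
      Nat.sInf_le ⟨L, rfl, fun t ht => hL1 t ht, hL3⟩
    have e1 : (k : ℚ) * L.length = (w.support.card : ℚ) - (Multiset.card w.cycleType : ℚ) := by
      have e0 : ((k * L.length + Multiset.card w.cycleType : ℕ) : ℚ)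
          = (w.support.card : ℚ) := by exact_mod_cast hL2
      push_cast at e0
      linarith
    have e2 : (K : ℚ) - (cyc w : ℚ)
        = (w.support.card : ℚ) - (Multiset.card w.cycleType : ℚ) := by
      rw [hcyc_cast]; ring
    have e3 : (k : ℚ) * (ellK k w) ≤ (k : ℚ) * L.length := by
      have hc : (ellK k w : ℚ) ≤ (L.length : ℚ) := by exact_mod_cast hup
      have hknn : (0 : ℚ) ≤ (k : ℚ) := by positivity
      exact mul_le_mul_of_nonneg_left hc hknn
    have e4 : (K : ℚ) - (cyc w : ℚ) ≤ (k : ℚ) * (ellK k w) := by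
      rw [hcyc_eq]; exact hlow
    have hQ : (k : ℚ) * (ellK k w) = (K : ℚ) - (cyc w : ℚ) := by linarith
    exact_mod_cast hQ
  · intro h2
    have hQ0 : (k : ℚ) * (ellK k w) = (K : ℚ) - (cyc w : ℚ) := by exact_mod_cast h2
    have hQ : (K : ℚ) - KCyc.cycQ w = (k : ℚ) * (ellK k w) := by
      rw [← hcyc_eq]; linarith
    have hstep := KCyc.listeq k hk l₀ hl₀' (by rw [hcardα, hl₀prod, hellK]; exact hQ)
    refine (KCyc.onemod_iff k w).mpr ?_
    intro p
    rw [← hl₀prod]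
    exact hstep p
end

section
/- Fix integers k, K ≥ 1. Let w be a permutation of {1,...,K} in the subgroup generated by (k+1)-cycles that is 1 mod k, and let u be in this subgroup with u ≤_k w. Then u is 1 mod k, u⁻¹w ≤_k w, and u⁻¹w is 1 mod k. -/
namespace LowerIdealAux
open Equiv Equiv.Perm Finset

variable {K k : ℕ}

/-- ℕ-power characterization of `SameCycle`. -/
lemma sc_iff_pow (v : Equiv.Perm (Fin K)) (x y : Fin K) :
    v.SameCycle x y ↔ ∃ n : ℕ, (v ^ n) x = y := by
  constructor
  · intro h
    obtain ⟨i, _, _, hi⟩ := h.exists_pow_eq v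
    exact ⟨i, hi⟩
  · rintro ⟨n, rfl⟩
    exact ⟨(n : ℤ), by simp⟩

lemma pow_succ_apply (v : Equiv.Perm (Fin K)) (n : ℕ) (x : Fin K) :
    (v ^ (n + 1)) x = v ((v ^ n) x) := by
  rw [pow_succ', Equiv.Perm.mul_apply]

lemma pow_mul_self_apply {v : Equiv.Perm (Fin K)} {q : ℕ} {x : Fin K}
    (hq : (v ^ q) x = x) : ∀ s : ℕ, (v ^ (q * s)) x = x := by
  intro s
  induction s with
  | zero => simp
  | succ s ih =>
    rw [Nat.mul_succ, pow_add, Equiv.Perm.mul_apply, hq, ih]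

lemma pow_mod_apply {v : Equiv.Perm (Fin K)} {q : ℕ} {x : Fin K}
    (hq : (v ^ q) x = x) (n : ℕ) : (v ^ n) x = (v ^ (n % q)) x := by
  conv_lhs => rw [← Nat.mod_add_div n q]
  rw [pow_add, Equiv.Perm.mul_apply, pow_mul_self_apply hq]

lemma sc_apply_right {v : Equiv.Perm (Fin K)} {x y : Fin K} (h : v.SameCycle x y) :
    v.SameCycle x (v y) :=
  h.trans ⟨1, by simp⟩

/-- the orbit of `x` under `v` as a finset. -/
def orb (v : Equiv.Perm (Fin K)) (x : Fin K) : Finset (Fin K) :=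
  Finset.univ.filter (fun y => v.SameCycle x y)

lemma mem_orb {v : Equiv.Perm (Fin K)} {x y : Fin K} :
    y ∈ orb v x ↔ v.SameCycle x y := by simp [orb]

lemma self_mem_orb (v : Equiv.Perm (Fin K)) (x : Fin K) : x ∈ orb v x :=
  mem_orb.2 (Equiv.Perm.SameCycle.refl v x)

/-- the size of the orbit of `x` under `v`. -/
def osz (v : Equiv.Perm (Fin K)) (x : Fin K) : ℕ := (orb v x).card

lemma osz_pos (v : Equiv.Perm (Fin K)) (x : Fin K) : 0 < osz v x :=
  Finset.card_pos.2 ⟨x, self_mem_orb v x⟩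

lemma orb_eq_of_sc {v : Equiv.Perm (Fin K)} {x y : Fin K} (h : v.SameCycle x y) :
    orb v x = orb v y := by
  ext z
  simp only [mem_orb]
  exact ⟨fun hz => h.symm.trans hz, fun hz => h.trans hz⟩

lemma osz_eq_of_sc {v : Equiv.Perm (Fin K)} {x y : Fin K} (h : v.SameCycle x y) :
    osz v x = osz v y := by rw [osz, osz, orb_eq_of_sc h]

/-- the orbit-counting rational: sum of reciprocals of orbit sizes. -/
noncomputable def cycQ (v : Equiv.Perm (Fin K)) : ℚ :=
  ∑ x : Fin K, ((osz v x : ℚ))⁻¹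

lemma cycQ_one : cycQ (1 : Equiv.Perm (Fin K)) = K := by
  have h : ∀ x : Fin K, orb (1 : Equiv.Perm (Fin K)) x = {x} := by
    intro x
    ext y
    simp only [mem_orb, Finset.mem_singleton]
    constructor
    · rintro ⟨n, hn⟩; simpa using hn.symm
    · rintro rfl; exact Equiv.Perm.SameCycle.refl _ _
  simp [cycQ, osz, h]

lemma cycQ_inv (v : Equiv.Perm (Fin K)) : cycQ v⁻¹ = cycQ v := by
  have h : ∀ x : Fin K, orb v⁻¹ x = orb v x := by
    intro x; ext y; simp [mem_orb, Equiv.Perm.sameCycle_inv]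
  simp [cycQ, osz, h]


section Merge

variable {v : Equiv.Perm (Fin K)} {a b : Fin K}

lemma mul_swap_apply (v : Equiv.Perm (Fin K)) (a b x : Fin K) :
    (v * Equiv.swap a b) x = v (Equiv.swap a b x) := rfl

/-- part 1 of the merge lemma: orbits not containing `a` nor `b` are unchanged. -/
lemma merge_part1 (h : ¬ v.SameCycle a b)
    (x : Fin K) (hxa : ¬ v.SameCycle a x) (hxb : ¬ v.SameCycle b x) (y : Fin K) :
    ((v * Equiv.swap a b).SameCycle x y ↔ v.SameCycle x y) := by
  have key : ∀ n : ℕ, ((v * Equiv.swap a b) ^ n) x = (v ^ n) x := by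
    intro n
    induction n with
    | zero => simp
    | succ n ih =>
      have hna : (v ^ n) x ≠ a := fun hc => hxa ((sc_iff_pow v x a).2 ⟨n, hc⟩).symm
      have hnb : (v ^ n) x ≠ b := fun hc => hxb ((sc_iff_pow v x b).2 ⟨n, hc⟩).symm
      rw [pow_succ_apply, pow_succ_apply, ih, mul_swap_apply,
        Equiv.swap_apply_of_ne_of_ne hna hnb]
  rw [sc_iff_pow, sc_iff_pow]
  constructor
  · rintro ⟨n, hn⟩; exact ⟨n, by rwa [key n] at hn⟩
  · rintro ⟨n, hn⟩; exact ⟨n, by rwa [key n]⟩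

/-- part 2 of the merge lemma: the orbit of `a` becomes the union. -/
lemma merge_part2 (hab : a ≠ b) (h : ¬ v.SameCycle a b) (y : Fin K) :
    ((v * Equiv.swap a b).SameCycle a y ↔ (v.SameCycle a y ∨ v.SameCycle b y)) := by
  set σ := v * Equiv.swap a b with hσ
  have hσa : σ a = v b := by rw [hσ, mul_swap_apply, Equiv.swap_apply_left]
  have hσb : σ b = v a := by rw [hσ, mul_swap_apply, Equiv.swap_apply_right]
  have hσo : ∀ z, z ≠ a → z ≠ b → σ z = v z := fun z h1 h2 => by
    rw [hσ, mul_swap_apply, Equiv.swap_apply_of_ne_of_ne h1 h2]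
  have hpB : ∃ n : ℕ, 0 < n ∧ (v ^ n) b = b :=
    ⟨orderOf v, orderOf_pos v, by simp [pow_orderOf_eq_one]⟩
  have hpA : ∃ n : ℕ, 0 < n ∧ (v ^ n) a = a :=
    ⟨orderOf v, orderOf_pos v, by simp [pow_orderOf_eq_one]⟩
  obtain ⟨p, ⟨hp0, hpspec⟩, hpmin⟩ :
      ∃ p, (0 < p ∧ (v ^ p) b = b) ∧ ∀ m, m < p → ¬(0 < m ∧ (v ^ m) b = b) :=
    ⟨Nat.find hpB, Nat.find_spec hpB, fun m hm => Nat.find_min hpB hm⟩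
  obtain ⟨q, ⟨hq0, hqspec⟩, hqmin⟩ :
      ∃ q, (0 < q ∧ (v ^ q) a = a) ∧ ∀ m, m < q → ¬(0 < m ∧ (v ^ m) a = a) :=
    ⟨Nat.find hpA, Nat.find_spec hpA, fun m hm => Nat.find_min hpA hm⟩
  -- traversal from a through the orbit of b
  have T1 : ∀ j, 1 ≤ j → j ≤ p → (σ ^ j) a = (v ^ j) b := by
    intro j
    induction j with
    | zero => omega
    | succ j ih =>
      intro _ hj
      rcases Nat.eq_zero_or_pos j with hj0 | hj1
      · subst hj0; simpa using hσa
      · have hja : (v ^ j) b ≠ a := fun hc => h (((sc_iff_pow v b a).2 ⟨j, hc⟩).symm)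
        have hjb : (v ^ j) b ≠ b := by
          intro hc
          exact hpmin j (by omega) ⟨hj1, hc⟩
        rw [pow_succ_apply, ih hj1 (by omega), hσo _ hja hjb, ← pow_succ_apply]
  have T2 : ∀ j, 1 ≤ j → j ≤ q → (σ ^ j) b = (v ^ j) a := by
    intro j
    induction j with
    | zero => omega
    | succ j ih =>
      intro _ hj
      rcases Nat.eq_zero_or_pos j with hj0 | hj1
      · subst hj0; simpa using hσb
      · have hjb : (v ^ j) a ≠ b := fun hc => h ((sc_iff_pow v a b).2 ⟨j, hc⟩)
        have hja : (v ^ j) a ≠ a := by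
          intro hc
          exact hqmin j (by omega) ⟨hj1, hc⟩
        rw [pow_succ_apply, ih hj1 (by omega), hσo _ hja hjb, ← pow_succ_apply]
  have hσab : σ.SameCycle a b := (sc_iff_pow σ a b).2 ⟨p, by rw [T1 p hp0 le_rfl, hpspec]⟩
  constructor
  · -- forward: the orbit of `a` under σ stays inside the union
    intro hy
    obtain ⟨n, hn⟩ := (sc_iff_pow σ a y).1 hy
    subst hn
    clear hy
    induction n with
    | zero => exact Or.inl (Equiv.Perm.SameCycle.refl v a)
    | succ n ih =>
      rw [pow_succ_apply]
      set z := (σ ^ n) a with hz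
      rcases ih with hl | hr
      · by_cases hza : z = a
        · rw [hza, hσa]; exact Or.inr ⟨1, by simp⟩
        · by_cases hzb : z = b
          · rw [hzb, hσb]; exact Or.inl ⟨1, by simp⟩
          · rw [hσo z hza hzb]; exact Or.inl (hl.trans ⟨1, by simp⟩)
      · by_cases hza : z = a
        · rw [hza, hσa]; exact Or.inr ⟨1, by simp⟩
        · by_cases hzb : z = b
          · rw [hzb, hσb]; exact Or.inl ⟨1, by simp⟩
          · rw [hσo z hza hzb]; exact Or.inr (hr.trans ⟨1, by simp⟩)
  · rintro (hy | hy)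
    · obtain ⟨n, hn⟩ := (sc_iff_pow v a y).1 hy
      have hred : (v ^ (n % q)) a = y := by
        rw [← pow_mod_apply hqspec n, hn]
      rcases Nat.eq_zero_or_pos (n % q) with h0 | h1
      · rw [h0] at hred; simp at hred; subst hred
        exact Equiv.Perm.SameCycle.refl σ a
      · have hlt : n % q < q := Nat.mod_lt n hq0
        have : (σ ^ (n % q)) b = y := by rw [T2 _ h1 (le_of_lt hlt), hred]
        exact hσab.trans ((sc_iff_pow σ b y).2 ⟨n % q, this⟩)
    · obtain ⟨n, hn⟩ := (sc_iff_pow v b y).1 hy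
      have hred : (v ^ (n % p)) b = y := by
        rw [← pow_mod_apply hpspec n, hn]
      rcases Nat.eq_zero_or_pos (n % p) with h0 | h1
      · rw [h0] at hred; simp at hred; subst hred
        exact hσab
      · have hlt : n % p < p := Nat.mod_lt n hp0
        exact (sc_iff_pow σ a y).2 ⟨n % p, by rw [T1 _ h1 (le_of_lt hlt), hred]⟩

/-- exclusion: if `a` and `b` are in the same cycle of `v`, then multiplying by the
swap splits them apart. -/
lemma not_sc_mul_swap (hab : a ≠ b) (h : v.SameCycle a b) :
    ¬ (v * Equiv.swap a b).SameCycle a b := by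
  set σ := v * Equiv.swap a b with hσ
  have hσa : σ a = v b := by rw [hσ, mul_swap_apply, Equiv.swap_apply_left]
  have hσo : ∀ z, z ≠ a → z ≠ b → σ z = v z := fun z h1 h2 => by
    rw [hσ, mul_swap_apply, Equiv.swap_apply_of_ne_of_ne h1 h2]
  have hex : ∃ n : ℕ, 0 < n ∧ (v ^ n) b = a := by
    obtain ⟨n, hn⟩ := (sc_iff_pow v b a).1 h.symm
    refine ⟨n, ?_, hn⟩
    rcases Nat.eq_zero_or_pos n with h0 | h1
    · exfalso; apply hab; subst h0; simpa using hn.symm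
    · exact h1
  obtain ⟨r, ⟨hr0, hrspec⟩, hrmin⟩ :
      ∃ r, (0 < r ∧ (v ^ r) b = a) ∧ ∀ m, m < r → ¬(0 < m ∧ (v ^ m) b = a) :=
    ⟨Nat.find hex, Nat.find_spec hex, fun m hm => Nat.find_min hex hm⟩
  have hmid : ∀ j, 1 ≤ j → j < r → (v ^ j) b ≠ a ∧ (v ^ j) b ≠ b := by
    intro j hj1 hjr
    constructor
    · intro hc; exact hrmin j hjr ⟨hj1, hc⟩
    · intro hc
      have : (v ^ (r - j)) b = a := by
        have : (v ^ (r - j + j)) b = a := by rwa [Nat.sub_add_cancel (le_of_lt hjr)]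
        rwa [pow_add, Equiv.Perm.mul_apply, hc] at this
      exact hrmin (r - j) (by omega) ⟨by omega, this⟩
  have T : ∀ j, 1 ≤ j → j < r → (σ ^ j) a = (v ^ j) b := by
    intro j
    induction j with
    | zero => omega
    | succ j ih =>
      intro _ hj
      rcases Nat.eq_zero_or_pos j with hj0 | hj1
      · subst hj0; simpa using hσa
      · obtain ⟨hja, hjb⟩ := hmid j hj1 (by omega)
        rw [pow_succ_apply, ih hj1 (by omega), hσo _ hja hjb, ← pow_succ_apply]
  have hra : (σ ^ r) a = a := by
    rcases Nat.lt_or_ge r 2 with hr2 | hr2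
    · have : r = 1 := by omega
      subst this
      simp only [pow_one]
      rw [hσa]
      simpa using hrspec
    · obtain ⟨hja, hjb⟩ := hmid (r - 1) (by omega) (by omega)
      have : (σ ^ (r - 1 + 1)) a = (v ^ (r - 1 + 1)) b := by
        rw [pow_succ_apply, T (r - 1) (by omega) (by omega), hσo _ hja hjb, ← pow_succ_apply]
      rw [Nat.sub_add_cancel (by omega)] at this
      rw [this, hrspec]
  intro hC
  obtain ⟨n, hn⟩ := (sc_iff_pow σ a b).1 hC
  have hred : (σ ^ (n % r)) a = b := by rw [← pow_mod_apply hra n, hn]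
  rcases Nat.eq_zero_or_pos (n % r) with h0 | h1
  · rw [h0] at hred; simp at hred; exact hab hred
  · have hlt : n % r < r := Nat.mod_lt n hr0
    rw [T _ h1 hlt] at hred
    exact (hmid _ h1 hlt).2 hred

end Merge

section MergeCounting

variable {v : Equiv.Perm (Fin K)} {a b : Fin K}

lemma merge_orb_a (hab : a ≠ b) (h : ¬ v.SameCycle a b) :
    orb (v * Equiv.swap a b) a = orb v a ∪ orb v b := by
  ext y
  simp only [mem_orb, Finset.mem_union]
  exact merge_part2 hab h y

lemma merge_orb_mem (hab : a ≠ b) (h : ¬ v.SameCycle a b) {x : Fin K}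
    (hx : x ∈ orb v a ∪ orb v b) :
    orb (v * Equiv.swap a b) x = orb v a ∪ orb v b := by
  have hsc : (v * Equiv.swap a b).SameCycle a x := by
    rw [← mem_orb, merge_orb_a hab h]; exact hx
  rw [← orb_eq_of_sc hsc, merge_orb_a hab h]

lemma merge_orb_not_mem (hab : a ≠ b) (h : ¬ v.SameCycle a b) {x : Fin K}
    (hx : x ∉ orb v a ∪ orb v b) :
    orb (v * Equiv.swap a b) x = orb v x := by
  simp only [Finset.mem_union, mem_orb, not_or] at hx
  ext y
  simp only [mem_orb]
  exact merge_part1 h x hx.1 hx.2 y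

lemma merge_osz_b (hab : a ≠ b) (h : ¬ v.SameCycle a b) :
    osz (v * Equiv.swap a b) b = osz v a + osz v b := by
  have hdisj : Disjoint (orb v a) (orb v b) := by
    rw [Finset.disjoint_left]
    intro z hza hzb
    exact h ((mem_orb.1 hza).trans (mem_orb.1 hzb).symm)
  have hb : b ∈ orb v a ∪ orb v b := Finset.mem_union_right _ (self_mem_orb v b)
  rw [osz, merge_orb_mem hab h hb, Finset.card_union_of_disjoint hdisj]
  rfl

lemma merge_osz_other (hab : a ≠ b) (h : ¬ v.SameCycle a b) {x : Fin K}
    (hx : ¬ (v * Equiv.swap a b).SameCycle b x) :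
    osz (v * Equiv.swap a b) x = osz v x ∧ ¬ v.SameCycle a x := by
  have hxU : x ∉ orb v a ∪ orb v b := by
    intro hmem
    apply hx
    have hb : b ∈ orb v a ∪ orb v b := Finset.mem_union_right _ (self_mem_orb v b)
    have h1 := merge_orb_mem hab h hb
    rw [← mem_orb, h1]
    exact hmem
  have hxa : ¬ v.SameCycle a x := fun hc => hxU (Finset.mem_union_left _ (mem_orb.2 hc))
  exact ⟨by rw [osz, merge_orb_not_mem hab h hxU]; rfl, hxa⟩

lemma merge_cycQ (hab : a ≠ b) (h : ¬ v.SameCycle a b) :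
    cycQ (v * Equiv.swap a b) = cycQ v - 1 := by
  classical
  set σ := v * Equiv.swap a b with hσ
  set U : Finset (Fin K) := orb v a ∪ orb v b with hU
  have hdisj : Disjoint (orb v a) (orb v b) := by
    rw [Finset.disjoint_left]
    intro z hza hzb
    exact h ((mem_orb.1 hza).trans (mem_orb.1 hzb).symm)
  have hUne : (0 : ℚ) < U.card := by
    have : a ∈ U := Finset.mem_union_left _ (self_mem_orb v a)
    exact_mod_cast Finset.card_pos.2 ⟨a, this⟩
  have hsum1 : ∑ x ∈ U, ((osz σ x : ℚ))⁻¹ = 1 := by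
    have hconst : ∀ x ∈ U, ((osz σ x : ℚ))⁻¹ = (U.card : ℚ)⁻¹ := by
      intro x hx
      rw [osz, merge_orb_mem hab h hx]
    rw [Finset.sum_congr rfl hconst, Finset.sum_const, nsmul_eq_mul,
      mul_inv_cancel₀ (ne_of_gt hUne)]
  have horb_const : ∀ c : Fin K, ∀ x ∈ orb v c, ((osz v x : ℚ))⁻¹ = ((orb v c).card : ℚ)⁻¹ := by
    intro c x hx
    rw [osz, orb_eq_of_sc (mem_orb.1 hx).symm]
  have hsum2 : ∑ x ∈ U, ((osz v x : ℚ))⁻¹ = 2 := by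
    rw [hU, Finset.sum_union hdisj]
    have ha : (0:ℚ) < (orb v a).card := by exact_mod_cast Finset.card_pos.2 ⟨a, self_mem_orb v a⟩
    have hb : (0:ℚ) < (orb v b).card := by exact_mod_cast Finset.card_pos.2 ⟨b, self_mem_orb v b⟩
    rw [Finset.sum_congr rfl (horb_const a), Finset.sum_congr rfl (horb_const b),
      Finset.sum_const, Finset.sum_const, nsmul_eq_mul, nsmul_eq_mul,
      mul_inv_cancel₀ (ne_of_gt ha), mul_inv_cancel₀ (ne_of_gt hb)]
    norm_num
  have hout : ∀ x ∈ Uᶜ, ((osz σ x : ℚ))⁻¹ = ((osz v x : ℚ))⁻¹ := by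
    intro x hx
    rw [Finset.mem_compl] at hx
    rw [osz, merge_orb_not_mem hab h hx]; rfl
  have e1 : cycQ σ = ∑ x ∈ U, ((osz σ x : ℚ))⁻¹ + ∑ x ∈ Uᶜ, ((osz σ x : ℚ))⁻¹ :=
    (Finset.sum_add_sum_compl U _).symm
  have e2 : cycQ v = ∑ x ∈ U, ((osz v x : ℚ))⁻¹ + ∑ x ∈ Uᶜ, ((osz v x : ℚ))⁻¹ :=
    (Finset.sum_add_sum_compl U _).symm
  rw [e1, e2, hsum1, hsum2, Finset.sum_congr rfl hout]
  ring

lemma cycQ_mul_swap (v : Equiv.Perm (Fin K)) {a b : Fin K} (hab : a ≠ b) :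
    cycQ (v * Equiv.swap a b) = cycQ v - 1 ∨ cycQ (v * Equiv.swap a b) = cycQ v + 1 := by
  by_cases h : v.SameCycle a b
  · right
    have h2 := not_sc_mul_swap hab h
    have h3 := merge_cycQ hab h2
    rw [mul_assoc, Equiv.swap_mul_self, mul_one] at h3
    linarith
  · left; exact merge_cycQ hab h

end MergeCounting

section CI

variable (w : Equiv.Perm (Fin K))

lemma orb_fixed {w : Equiv.Perm (Fin K)} {x : Fin K} (hx : w x = x) : orb w x = {x} := by
  ext y
  simp only [mem_orb, Finset.mem_singleton]
  constructor
  · intro h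
    obtain ⟨n, hn⟩ := (sc_iff_pow w x y).1 h
    have : ∀ m : ℕ, (w ^ m) x = x := by
      intro m
      induction m with
      | zero => simp
      | succ m ih => rw [pow_succ, Equiv.Perm.mul_apply, hx, ih]
    rw [this n] at hn
    exact hn.symm
  · rintro rfl; exact Equiv.Perm.SameCycle.refl _ _

lemma orb_support {w : Equiv.Perm (Fin K)} {x : Fin K} (hx : x ∈ w.support) :
    orb w x = (w.cycleOf x).support := by
  ext y
  rw [mem_orb, Equiv.Perm.mem_support_cycleOf_iff]
  exact ⟨fun h => ⟨h, hx⟩, fun h => h.1⟩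

lemma osz_fixed {w : Equiv.Perm (Fin K)} {x : Fin K} (hx : w x = x) : osz w x = 1 := by
  rw [osz, orb_fixed hx, Finset.card_singleton]

/-- orbit-counting: `cycQ` equals the number of orbits. -/
lemma cycQ_eq_card_orbits : cycQ w = ((Finset.univ.image (orb w)).card : ℚ) := by
  classical
  set R := Finset.univ.image (orb w) with hR
  have hcover : (Finset.univ : Finset (Fin K)) = R.biUnion id := by
    ext x
    simp only [Finset.mem_univ, true_iff, Finset.mem_biUnion, id]
    exact ⟨orb w x, Finset.mem_image_of_mem _ (Finset.mem_univ x), self_mem_orb w x⟩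
  have hdisj : (↑R : Set (Finset (Fin K))).PairwiseDisjoint id := by
    intro B1 h1 B2 h2 hne
    simp only [hR, Finset.coe_image, Set.mem_image] at h1 h2
    obtain ⟨x1, -, rfl⟩ := h1
    obtain ⟨x2, -, rfl⟩ := h2
    rw [Function.onFun, id, id, Finset.disjoint_left]
    intro z hz1 hz2
    exact hne (by rw [orb_eq_of_sc (mem_orb.1 hz1), orb_eq_of_sc (mem_orb.1 hz2)])
  have : cycQ w = ∑ B ∈ R, ∑ x ∈ B, ((osz w x : ℚ))⁻¹ := by
    rw [cycQ]
    rw [show (Finset.univ : Finset (Fin K)) = R.biUnion id from hcover]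
    rw [Finset.sum_biUnion hdisj]
    rfl
  rw [this]
  have hone : ∀ B ∈ R, ∑ x ∈ B, ((osz w x : ℚ))⁻¹ = 1 := by
    intro B hB
    simp only [hR, Finset.mem_image] at hB
    obtain ⟨x0, -, rfl⟩ := hB
    have hpos : (0 : ℚ) < (orb w x0).card := by
      exact_mod_cast Finset.card_pos.2 ⟨x0, self_mem_orb w x0⟩
    have hconst : ∀ x ∈ orb w x0, ((osz w x : ℚ))⁻¹ = ((orb w x0).card : ℚ)⁻¹ := by
      intro x hx
      rw [osz, orb_eq_of_sc (mem_orb.1 hx).symm]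
    rw [Finset.sum_congr rfl hconst, Finset.sum_const, nsmul_eq_mul,
      mul_inv_cancel₀ (ne_of_gt hpos)]
  rw [Finset.sum_congr rfl hone, Finset.sum_const, nsmul_eq_mul, mul_one]

lemma card_orbits_eq :
    (Finset.univ.image (orb w)).card = w.cycleType.card + (K - w.support.card) := by
  classical
  have hsplit : (Finset.univ : Finset (Fin K)) = w.support ∪ w.supportᶜ := by
    simp
  have himg : Finset.univ.image (orb w) =
      w.support.image (orb w) ∪ w.supportᶜ.image (orb w) := by
    rw [hsplit, Finset.image_union]
  have hdisj : Disjoint (w.support.image (orb w)) (w.supportᶜ.image (orb w)) := by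
    rw [Finset.disjoint_left]
    intro B hB1 hB2
    simp only [Finset.mem_image] at hB1 hB2
    obtain ⟨x, hx, rfl⟩ := hB1
    obtain ⟨y, hy, hyx⟩ := hB2
    rw [Finset.mem_compl, Equiv.Perm.notMem_support] at hy
    have : x ∈ orb w y := by rw [hyx]; exact self_mem_orb w x
    rw [orb_fixed hy, Finset.mem_singleton] at this
    subst this
    rw [Equiv.Perm.mem_support] at hx
    exact hx hy
  have h2 : (w.supportᶜ.image (orb w)).card = K - w.support.card := by
    have hinj : Set.InjOn (orb w) ↑(w.supportᶜ) := by
      intro x hx y hy hxy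
      simp only [Finset.coe_compl, Set.mem_compl_iff, Finset.mem_coe,
        Equiv.Perm.mem_support, not_not] at hx hy
      have : y ∈ orb w x := by rw [hxy]; exact self_mem_orb w y
      rw [orb_fixed hx, Finset.mem_singleton] at this
      exact this.symm
    rw [Finset.card_image_of_injOn hinj, Finset.card_compl, Fintype.card_fin]
  have h1 : (w.support.image (orb w)).card = w.cycleType.card := by
    have himg2 : w.support.image (orb w) = w.cycleFactorsFinset.image Equiv.Perm.support := by
      ext B
      simp only [Finset.mem_image]
      constructor
      · rintro ⟨x, hx, rfl⟩
        exact ⟨w.cycleOf x, Equiv.Perm.cycleOf_mem_cycleFactorsFinset_iff.2 hx,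
          (orb_support hx).symm⟩
      · rintro ⟨c, hc, rfl⟩
        have hcyc : c.IsCycle := (Equiv.Perm.mem_cycleFactorsFinset_iff.1 hc).1
        obtain ⟨x, hx⟩ := hcyc.nonempty_support
        have hxw : x ∈ w.support := by
          rw [Equiv.Perm.mem_support]
          rw [Equiv.Perm.mem_support] at hx
          rw [← (Equiv.Perm.mem_cycleFactorsFinset_iff.1 hc).2 x (Equiv.Perm.mem_support.2 hx)]
          exact hx
        refine ⟨x, hxw, ?_⟩
        rw [orb_support hxw, ← Equiv.Perm.cycle_is_cycleOf hx hc]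
    have hinj : Set.InjOn Equiv.Perm.support (↑w.cycleFactorsFinset : Set (Equiv.Perm (Fin K))) := by
      intro c1 hc1 c2 hc2 hs
      simp only [Finset.mem_coe] at hc1 hc2
      have hcyc1 : c1.IsCycle := (Equiv.Perm.mem_cycleFactorsFinset_iff.1 hc1).1
      obtain ⟨x, hx⟩ := hcyc1.nonempty_support
      have hx2 : x ∈ c2.support := by rw [← hs]; exact hx
      rw [Equiv.Perm.cycle_is_cycleOf hx hc1, Equiv.Perm.cycle_is_cycleOf hx2 hc2]
    rw [himg2, Finset.card_image_of_injOn hinj, Equiv.Perm.cycleType_def,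
      Multiset.card_map]
    rfl
  rw [himg, Finset.card_union_of_disjoint hdisj, h1, h2]

end CI

/-- pointwise version of `1 mod k`. -/
def OM (k : ℕ) (w : Equiv.Perm (Fin K)) : Prop :=
  ∀ x : Fin K, osz w x ≡ 1 [MOD k]

lemma om_iff (w : Equiv.Perm (Fin K)) : IsOneModK k w ↔ OM k w := by
  constructor
  · intro h x
    by_cases hx : x ∈ w.support
    · have : osz w x ∈ w.cycleType := by
        rw [osz, orb_support hx, Equiv.Perm.cycleType_def]
        exact Multiset.mem_map.2 ⟨w.cycleOf x,
          Equiv.Perm.cycleOf_mem_cycleFactorsFinset_iff.2 hx, rfl⟩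
      exact h _ this
    · rw [Equiv.Perm.notMem_support] at hx
      rw [osz_fixed hx]
  · intro h l hl
    rw [Equiv.Perm.cycleType_def] at hl
    obtain ⟨c, hc, rfl⟩ := Multiset.mem_map.1 hl
    have hcmem : c ∈ w.cycleFactorsFinset := hc
    have hcyc : c.IsCycle := (Equiv.Perm.mem_cycleFactorsFinset_iff.1 hcmem).1
    obtain ⟨x, hx⟩ := hcyc.nonempty_support
    have hxw : x ∈ w.support := by
      rw [Equiv.Perm.mem_support]
      rw [Equiv.Perm.mem_support] at hx
      rw [← (Equiv.Perm.mem_cycleFactorsFinset_iff.1 hcmem).2 x (Equiv.Perm.mem_support.2 hx)]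
      exact hx
    have : (Finset.card ∘ Equiv.Perm.support) c = osz w x := by
      rw [osz, orb_support hxw, ← Equiv.Perm.cycle_is_cycleOf hx hcmem]
      rfl
    rw [this]
    exact h x

/-- every `(k+1)`-cycle comes from a nodup list of length `k+1`. -/
lemma exists_swapList {t : Equiv.Perm (Fin K)} (ht : IsKCycle k t) :
    ∃ l : List (Fin K), l.Nodup ∧ l.length = k + 1 ∧ l.formPerm = t := by
  classical
  have hne : t.support.Nonempty := by
    rw [← Finset.card_pos, ht.2]; omega
  obtain ⟨x, hx⟩ := hne
  have hxt : t x ≠ x := Equiv.Perm.mem_support.1 hx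
  refine ⟨t.toList x, Equiv.Perm.nodup_toList t x, ?_, ?_⟩
  · rw [Equiv.Perm.length_toList, ht.1.cycleOf_eq hxt, ht.2]
  · rw [Equiv.Perm.formPerm_toList, ht.1.cycleOf_eq hxt]

/-- stepping bounds for `formPerm` of a nodup list. -/
lemma cycQ_formPerm_bounds :
    ∀ (l : List (Fin K)), l.Nodup → ∀ v : Equiv.Perm (Fin K),
      cycQ v - ((l.length - 1 : ℕ) : ℚ) ≤ cycQ (v * l.formPerm) ∧
      cycQ (v * l.formPerm) ≤ cycQ v + ((l.length - 1 : ℕ) : ℚ) := by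
  intro l
  induction l with
  | nil => intro _ v; simp
  | cons a l ih =>
    intro hnd v
    match l, hnd with
    | [], _ => simp
    | b :: t, hnd =>
      have hab : a ≠ b := by
        intro hc; subst hc
        simp at hnd
      have hnd' : (b :: t).Nodup := hnd.of_cons
      rw [List.formPerm_cons_cons, ← mul_assoc]
      obtain ⟨ih1, ih2⟩ := ih hnd' (v * Equiv.swap a b)
      have hstep := cycQ_mul_swap v hab
      have hlen : ((a :: b :: t).length - 1 : ℕ) = ((b :: t).length - 1 : ℕ) + 1 := by
        simp
      rw [hlen]
      push_cast
      rcases hstep with h | h <;> constructor <;> linarith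

lemma cycQ_mul_kcycle_bounds {t : Equiv.Perm (Fin K)} (ht : IsKCycle k t)
    (v : Equiv.Perm (Fin K)) :
    cycQ v - k ≤ cycQ (v * t) ∧ cycQ (v * t) ≤ cycQ v + k := by
  obtain ⟨l, hnd, hlen, hform⟩ := exists_swapList ht
  have := cycQ_formPerm_bounds l hnd v
  rw [hform, hlen] at this
  simpa using this

lemma cycQ_prod_ge :
    ∀ (L : List (Equiv.Perm (Fin K))), (∀ t ∈ L, IsKCycle k t) →
    ∀ v, cycQ v - k * L.length ≤ cycQ (v * L.prod) := by
  intro L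
  induction L with
  | nil => intro _ v; simp
  | cons t L ih =>
    intro hL v
    have h1 := (cycQ_mul_kcycle_bounds (hL t List.mem_cons_self) v).1
    have h2 := ih (fun s hs => hL s (List.mem_cons_of_mem t hs)) (v * t)
    rw [List.prod_cons, ← mul_assoc]
    simp only [List.length_cons]
    push_cast
    push_cast at h2
    linarith

/-- the chain invariant (heart of Lemma B). -/
lemma chain_invariant :
    ∀ (l : List (Fin K)) (a : Fin K) (v : Equiv.Perm (Fin K)) (j : ℕ),
      (a :: l).Nodup →
      (∀ x, ¬ v.SameCycle a x → osz v x ≡ 1 [MOD k]) →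
      (osz v a ≡ j + 1 [MOD k]) →
      cycQ (v * (a :: l).formPerm) = cycQ v - l.length →
      (∀ x, ¬ (v * (a :: l).formPerm).SameCycle ((a :: l).getLast (by simp)) x →
          osz (v * (a :: l).formPerm) x ≡ 1 [MOD k]) ∧
      osz (v * (a :: l).formPerm) ((a :: l).getLast (by simp)) ≡ j + 1 + l.length [MOD k] := by
  intro l
  induction l with
  | nil =>
    intro a v j _ hother ha _
    simpa using ⟨hother, ha⟩
  | cons b t ih =>
    intro a v j hnd hother ha hq
    have hab : a ≠ b := by intro hc; subst hc; simp at hnd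
    have hnd' : (b :: t).Nodup := hnd.of_cons
    rw [List.formPerm_cons_cons, ← mul_assoc] at hq ⊢
    set σ := v * Equiv.swap a b with hσ
    -- forcing : the first step must be a merge
    have hbounds := cycQ_formPerm_bounds (b :: t) hnd' σ
    have hsc : ¬ v.SameCycle a b := by
      intro hc
      have h3 := merge_cycQ hab (not_sc_mul_swap hab hc)
      rw [mul_assoc, Equiv.swap_mul_self, mul_one, ← hσ] at h3
      have hlow := hbounds.1
      simp only [List.length_cons] at hq hlow
      push_cast at hq hlow
      linarith
    have hstep : cycQ σ = cycQ v - 1 := merge_cycQ hab hsc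
    have hq' : cycQ (σ * (b :: t).formPerm) = cycQ σ - t.length := by
      simp only [List.length_cons] at hq
      push_cast at hq ⊢
      rw [hstep]
      push_cast
      linarith
    -- new invariant data
    have hother' : ∀ x, ¬ σ.SameCycle b x → osz σ x ≡ 1 [MOD k] := by
      intro x hx
      obtain ⟨heq, hna⟩ := merge_osz_other hab hsc hx
      rw [heq]
      exact hother x hna
    have hb' : osz σ b ≡ (j + 1) + 1 [MOD k] := by
      rw [merge_osz_b hab hsc]
      have h2 : osz v b ≡ 1 [MOD k] := hother b (fun hc => hsc hc)
      exact ha.add h2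
    have hcon := ih b σ (j + 1) hnd' hother' hb' hq'
    have hlast : (a :: b :: t).getLast (by simp) = (b :: t).getLast (by simp) := by
      rw [List.getLast_cons (by simp)]
    rw [hlast]
    refine ⟨hcon.1, ?_⟩
    have := hcon.2
    have harith : j + 1 + 1 + t.length = j + 1 + (b :: t).length := by simp; omega
    rw [← harith]
    exact this

/-- Lemma B: multiplying a 1-mod-k permutation by a (k+1)-cycle with maximal
orbit-count drop stays 1 mod k. -/
lemma OM_mul_kcycle {t v : Equiv.Perm (Fin K)} (ht : IsKCycle k t) (hv : OM k v)
    (heq : cycQ (v * t) = cycQ v - k) : OM k (v * t) := by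
  obtain ⟨l, hnd, hlen, hform⟩ := exists_swapList ht
  match l, hnd, hlen, hform with
  | a :: l, hnd, hlen, hform =>
    have hq : cycQ (v * (a :: l).formPerm) = cycQ v - l.length := by
      rw [hform, heq]
      have : l.length = k := by simpa using hlen
      rw [this]
    have hcon := chain_invariant l a v 0 hnd (fun x _ => hv x) (by simpa using hv a) hq
    rw [hform] at hcon
    set y := (a :: l).getLast (by simp) with hy
    intro x
    by_cases hsc : (v * t).SameCycle y x
    · rw [← osz_eq_of_sc hsc]
      have h2 := hcon.2
      have : l.length = k := by simpa using hlen
      rw [this] at h2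
      -- osz (v*t) y ≡ 0 + 1 + k ≡ 1 [MOD k]
      calc osz (v * t) y ≡ 0 + 1 + k [MOD k] := h2
        _ ≡ 1 + 0 [MOD k] := by
            simpa using (Nat.ModEq.refl (0 + 1)).add (Nat.modEq_zero_iff_dvd.2 dvd_rfl)
        _ = 1 := by omega
    · exact hcon.1 x hsc

/-- Lemma C: a product of m (k+1)-cycles with cycQ = K - k*m is 1 mod k (pointwise). -/
lemma OM_of_list (hk : 1 ≤ k) :
    ∀ (L : List (Equiv.Perm (Fin K))), (∀ t ∈ L, IsKCycle k t) →
      cycQ L.prod = K - k * L.length → OM k L.prod := by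
  intro L
  induction L using List.reverseRecOn with
  | nil =>
    intro _ _
    rw [List.prod_nil]
    intro x
    rw [osz_fixed (by simp)]
  | append_singleton L t ih =>
    intro hall hq
    have hLt : ∀ s ∈ L, IsKCycle k s := fun s hs => hall s (by simp [hs])
    have htk : IsKCycle k t := hall t (by simp)
    rw [List.prod_append, List.prod_singleton] at hq ⊢
    have hge : cycQ (1 * L.prod) ≥ cycQ (1 : Equiv.Perm (Fin K)) - k * L.length :=
      cycQ_prod_ge L hLt 1
    rw [one_mul, cycQ_one] at hge
    have hbd := (cycQ_mul_kcycle_bounds htk L.prod).1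
    have hlen : ((L ++ [t]).length : ℚ) = L.length + 1 := by
      simp
    rw [hlen] at hq
    have hLq : cycQ L.prod = K - k * L.length := by
      push_cast at hq hge hbd ⊢
      linarith
    have heq : cycQ (L.prod * t) = cycQ L.prod - k := by
      rw [hLq]
      push_cast at hq ⊢
      linarith
    exact OM_mul_kcycle htk (ih hLt hLq) heq

-- ========== construction D ==========

lemma zipWith_take (α : Type*) [DecidableEq α] :
    ∀ (m : ℕ) (l : List α), (l.take (m+1)).zipWith Equiv.swap (l.take (m+1)).tail
      = (l.zipWith Equiv.swap l.tail).take m := by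
  intro m
  induction m with
  | zero =>
    intro l
    match l with
    | [] => simp
    | a :: l => simp
  | succ m ih =>
    intro l
    match l with
    | [] => simp
    | [a] => simp
    | a :: b :: l =>
      have := ih (b :: l)
      simp only [List.take, List.tail, List.zipWith] at this ⊢
      rw [this]

lemma zipWith_drop (α : Type*) [DecidableEq α] :
    ∀ (m : ℕ) (l : List α), (l.drop m).zipWith Equiv.swap (l.drop m).tail
      = (l.zipWith Equiv.swap l.tail).drop m := by
  intro m
  induction m with
  | zero => intro l; simp
  | succ m ih =>
    intro l
    match l with
    | [] => simp
    | [a] => simp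
    | a :: b :: l =>
      have := ih (b :: l)
      simp only [List.drop, List.tail, List.zipWith] at this ⊢
      rw [this]

lemma formPerm_split (l : List (Fin K)) (m : ℕ) :
    l.formPerm = (l.take (m+1)).formPerm * (l.drop m).formPerm := by
  show (l.zipWith Equiv.swap l.tail).prod = _
  rw [show (l.take (m+1)).formPerm = ((l.take (m+1)).zipWith Equiv.swap (l.take (m+1)).tail).prod from rfl,
    show (l.drop m).formPerm = ((l.drop m).zipWith Equiv.swap (l.drop m).tail).prod from rfl,
    zipWith_take, zipWith_drop, List.prod_take_mul_prod_drop]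

/-- chunk a long cycle (given by a nodup list) into (k+1)-cycles. -/
lemma chunk (hk : 1 ≤ k) :
    ∀ (q : ℕ) (l : List (Fin K)), l.Nodup → l.length = q * k + 1 →
      ∃ L : List (Equiv.Perm (Fin K)), (∀ t ∈ L, IsKCycle k t) ∧
        L.prod = l.formPerm ∧ L.length = q := by
  intro q
  induction q with
  | zero =>
    intro l hnd hlen
    simp only [Nat.zero_mul, Nat.zero_add] at hlen
    obtain ⟨x, rfl⟩ := List.length_eq_one_iff.1 hlen
    exact ⟨[], by simp, by simp, rfl⟩
  | succ q ih =>
    intro l hnd hlen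
    have hklen : k + 1 ≤ l.length := by rw [hlen]; nlinarith
    have htake_nd : (l.take (k+1)).Nodup := hnd.sublist (List.take_sublist _ _)
    have htake_len : (l.take (k+1)).length = k + 1 := by
      rw [List.length_take]; omega
    have hdrop_nd : (l.drop k).Nodup := hnd.sublist (List.drop_sublist _ _)
    have hdrop_len : (l.drop k).length = q * k + 1 := by
      have h1 : (q+1)*k = q*k + k := by ring
      rw [List.length_drop, hlen, h1]
      omega
    obtain ⟨L', hL'c, hL'p, hL'len⟩ := ih (l.drop k) hdrop_nd hdrop_len
    refine ⟨(l.take (k+1)).formPerm :: L', ?_, ?_, by simp [hL'len]⟩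
    · intro s hs
      rcases List.mem_cons.1 hs with rfl | hs
      · constructor
        · exact List.isCycle_formPerm htake_nd (by omega)
        · rw [List.support_formPerm_of_nodup _ htake_nd
            (fun x hx => by rw [hx] at htake_len; simp at htake_len; omega),
            List.toFinset_card_of_nodup htake_nd, htake_len]
      · exact hL'c s hs
    · rw [List.prod_cons, hL'p, ← formPerm_split]

/-- decompose a list of 1-mod-k cycles into (k+1)-cycles with exact length accounting. -/
lemma exists_fact_of_cycles (hk : 1 ≤ k) :
    ∀ (lc : List (Equiv.Perm (Fin K))),
      (∀ c ∈ lc, c.IsCycle ∧ c.support.card % k = 1 % k) →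
      ∃ L : List (Equiv.Perm (Fin K)), (∀ t ∈ L, IsKCycle k t) ∧
        L.prod = lc.prod ∧ k * L.length + lc.length = (lc.map (fun c => c.support.card)).sum := by
  intro lc
  induction lc with
  | nil => exact fun _ => ⟨[], by simp, by simp, by simp⟩
  | cons c lc ih =>
    intro hall
    obtain ⟨hcyc, hmod⟩ := hall c List.mem_cons_self
    obtain ⟨L', hL'c, hL'p, hL'len⟩ := ih (fun d hd => hall d (List.mem_cons_of_mem c hd))
    -- write c as formPerm of a nodup list of length q*k+1
    have hs2 : 2 ≤ c.support.card := hcyc.two_le_card_support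
    obtain ⟨x, hx⟩ := hcyc.nonempty_support
    have hxc : c x ≠ x := Equiv.Perm.mem_support.1 hx
    have hnd := Equiv.Perm.nodup_toList c x
    have hlen : (c.toList x).length = c.support.card := by
      rw [Equiv.Perm.length_toList, hcyc.cycleOf_eq hxc]
    have hform : (c.toList x).formPerm = c := by
      rw [Equiv.Perm.formPerm_toList, hcyc.cycleOf_eq hxc]
    have hdvd : k ∣ c.support.card - 1 := (Nat.modEq_iff_dvd' (by omega)).1
      (Nat.ModEq.symm hmod)
    obtain ⟨q, hq⟩ := hdvd
    have hlen' : (c.toList x).length = q * k + 1 := by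
      have hcomm : k * q = q * k := Nat.mul_comm k q
      rw [hlen]
      omega
    obtain ⟨Lc, hLc_c, hLc_p, hLc_len⟩ := chunk hk q (c.toList x) hnd hlen'
    refine ⟨Lc ++ L', ?_, ?_, ?_⟩
    · intro s hs
      rcases List.mem_append.1 hs with hs | hs
      · exact hLc_c s hs
      · exact hL'c s hs
    · rw [List.prod_append, hLc_p, hform, hL'p, List.prod_cons]
    · simp only [List.length_append, List.length_cons, List.map_cons, List.sum_cons]
      rw [Nat.mul_add, hLc_len]
      omega


lemma cycQ_eq (w : Equiv.Perm (Fin K)) :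
    cycQ w = (w.cycleType.card : ℚ) + (K : ℚ) - (w.support.card : ℚ) := by
  have hle : w.support.card ≤ K := by
    simpa using Finset.card_le_univ w.support
  rw [cycQ_eq_card_orbits, card_orbits_eq]
  push_cast [hle]
  ring

lemma prod_cycleFactors (w : Equiv.Perm (Fin K)) :
    (w.cycleFactorsFinset.toList).prod = w := by
  classical
  conv_rhs => rw [← Equiv.Perm.cycleFactorsFinset_noncommProd w]
  have h2 : w.cycleFactorsFinset = (w.cycleFactorsFinset.toList).toFinset :=
    (Finset.toList_toFinset _).symm
  rw [Finset.noncommProd_congr h2 (g := id) (fun x _ => rfl)]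
  have := Finset.noncommProd_toFinset w.cycleFactorsFinset.toList id
    (fun x hx y hy hne => Equiv.Perm.cycleFactorsFinset_mem_commute w
      (by simpa using hx) (by simpa using hy) hne) (Finset.nodup_toList _)
  rw [List.map_id] at this
  exact this.symm

lemma exists_factorization (hk : 1 ≤ k) (w : Equiv.Perm (Fin K)) (hw1 : IsOneModK k w) :
    ∃ L : List (Equiv.Perm (Fin K)), (∀ t ∈ L, IsKCycle k t) ∧
      L.prod = w ∧ k * L.length + w.cycleType.card = w.support.card := by
  classical
  set lc := w.cycleFactorsFinset.toList with hlc
  have hmem : ∀ c ∈ lc, c ∈ w.cycleFactorsFinset := fun c hc => by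
    rwa [← Finset.mem_toList]
  have hall : ∀ c ∈ lc, c.IsCycle ∧ c.support.card % k = 1 % k := by
    intro c hc
    have hcf := hmem c hc
    refine ⟨(Equiv.Perm.mem_cycleFactorsFinset_iff.1 hcf).1, ?_⟩
    apply hw1
    rw [Equiv.Perm.cycleType_def]
    exact Multiset.mem_map.2 ⟨c, hcf, rfl⟩
  obtain ⟨L, hLc, hLp, hLlen⟩ := exists_fact_of_cycles hk lc hall
  refine ⟨L, hLc, by rw [hLp, hlc, prod_cycleFactors], ?_⟩
  have h1 : lc.length = w.cycleType.card := by
    rw [hlc, Finset.length_toList, Equiv.Perm.cycleType_def, Multiset.card_map]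
    rfl
  have h2 : (lc.map (fun c => c.support.card)).sum = w.support.card := by
    rw [← Equiv.Perm.sum_cycleType, Equiv.Perm.cycleType_def]
    have : w.cycleFactorsFinset.val = (lc : Multiset (Equiv.Perm (Fin K))) := by
      rw [hlc, Finset.coe_toList]
    rw [this]
    simp
  rw [← h1, ← h2, hLlen]

lemma inv_list {l : List (Equiv.Perm (Fin K))} (hc : ∀ t ∈ l, IsKCycle k t) :
    (∀ t ∈ (l.map (fun s => s⁻¹)).reverse, IsKCycle k t) ∧
      ((l.map (fun s => s⁻¹)).reverse).prod = l.prod⁻¹ := by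
  constructor
  · intro t ht
    rw [List.mem_reverse, List.mem_map] at ht
    obtain ⟨s, hs, rfl⟩ := ht
    exact ⟨(hc s hs).1.inv, by rw [Equiv.Perm.support_inv]; exact (hc s hs).2⟩
  · rw [← List.prod_inv_reverse]

lemma mem_gen_exists {w : Equiv.Perm (Fin K)} (hw : w ∈ kGenSubgroup k K) :
    ∃ l : List (Equiv.Perm (Fin K)), (∀ t ∈ l, IsKCycle k t) ∧ l.prod = w := by
  refine Subgroup.closure_induction ?_ ?_ ?_ ?_ hw
  · intro x hx
    exact ⟨[x], by simpa using hx, by simp⟩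
  · exact ⟨[], by simp, by simp⟩
  · rintro x y _ _ ⟨l1, hc1, hp1⟩ ⟨l2, hc2, hp2⟩
    refine ⟨l1 ++ l2, ?_, by rw [List.prod_append, hp1, hp2]⟩
    intro t ht
    rcases List.mem_append.1 ht with h | h
    · exact hc1 t h
    · exact hc2 t h
  · rintro x _ ⟨l, hc, hp⟩
    obtain ⟨h1, h2⟩ := inv_list hc
    exact ⟨(l.map (fun s => s⁻¹)).reverse, h1, by rw [h2, hp]⟩

lemma ellK_spec {w : Equiv.Perm (Fin K)} (hw : w ∈ kGenSubgroup k K) :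
    ∃ l : List (Equiv.Perm (Fin K)),
      l.length = ellK k w ∧ (∀ t ∈ l, IsKCycle k t) ∧ l.prod = w := by
  obtain ⟨l, hc, hp⟩ := mem_gen_exists hw
  have hne : {m | ∃ l : List (Equiv.Perm (Fin K)),
      l.length = m ∧ (∀ t ∈ l, IsKCycle k t) ∧ l.prod = w}.Nonempty :=
    ⟨l.length, l, rfl, hc, hp⟩
  exact Nat.sInf_mem hne

lemma ellK_le {l : List (Equiv.Perm (Fin K))} (hc : ∀ t ∈ l, IsKCycle k t) :
    ellK k l.prod ≤ l.length :=
  Nat.sInf_le ⟨l, rfl, hc, rfl⟩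

lemma fac_conj (g w : Equiv.Perm (Fin K)) {m : ℕ}
    (h : ∃ l : List (Equiv.Perm (Fin K)),
      l.length = m ∧ (∀ t ∈ l, IsKCycle k t) ∧ l.prod = w) :
    ∃ l : List (Equiv.Perm (Fin K)),
      l.length = m ∧ (∀ t ∈ l, IsKCycle k t) ∧ l.prod = g⁻¹ * w * g := by
  obtain ⟨l, hlen, hc, hp⟩ := h
  refine ⟨l.map (fun t => g⁻¹ * t * g), by simp [hlen], ?_, ?_⟩
  · intro t ht
    rw [List.mem_map] at ht
    obtain ⟨s, hs, rfl⟩ := ht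
    constructor
    · have := (hc s hs).1.conj (g := g⁻¹)
      simpa using this
    · have h2 : (g⁻¹ * s * g).support = s.support.map g⁻¹.toEmbedding := by
        have := Equiv.Perm.support_conj (σ := g⁻¹) (τ := s)
        simpa using this
      rw [h2, Finset.card_map]
      exact (hc s hs).2
  · have hcoe : (fun t : Equiv.Perm (Fin K) => g⁻¹ * t * g) =
        fun t => (MulAut.conj g⁻¹) t := by
      funext t
      simp [MulAut.conj_apply]
    rw [hcoe, List.prod_hom l (MulAut.conj g⁻¹ : Equiv.Perm (Fin K) ≃* Equiv.Perm (Fin K)), hp]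
    simp [MulAut.conj_apply]

lemma ellK_conj (g w : Equiv.Perm (Fin K)) : ellK k (g⁻¹ * w * g) = ellK k w := by
  have hset : {m | ∃ l : List (Equiv.Perm (Fin K)),
      l.length = m ∧ (∀ t ∈ l, IsKCycle k t) ∧ l.prod = g⁻¹ * w * g}
      = {m | ∃ l : List (Equiv.Perm (Fin K)),
      l.length = m ∧ (∀ t ∈ l, IsKCycle k t) ∧ l.prod = w} := by
    ext m
    constructor
    · intro h
      have := fac_conj g⁻¹ (g⁻¹ * w * g) h
      simpa [mul_assoc] using this
    · exact fun h => fac_conj g w h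
  rw [ellK, hset]
  rfl


end LowerIdealAux

open LowerIdealAux

/-- Corollary 2.4: if `w` is `1 mod k` and `u ≤_k w`, then `u` is `1 mod k`,
`u⁻¹w ≤_k w`, and `u⁻¹w` is `1 mod k`. -/
theorem lower_ideal (k K : ℕ) (hk : 1 ≤ k) (hK : 1 ≤ K)
    (w u : Equiv.Perm (Fin K)) (hw : w ∈ kGenSubgroup k K) (hu : u ∈ kGenSubgroup k K)
    (hw1 : IsOneModK k w) (hle : absLe k u w) :
    IsOneModK k u ∧ absLe k (u⁻¹ * w) w ∧ IsOneModK k (u⁻¹ * w) := by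
  classical
  have hwv : u⁻¹ * w ∈ kGenSubgroup k K := mul_mem (inv_mem hu) hw
  obtain ⟨lu, hlu_len, hlu_c, hlu_p⟩ := ellK_spec hu
  obtain ⟨lv, hlv_len, hlv_c, hlv_p⟩ := ellK_spec hwv
  obtain ⟨lw, hlw_len, hlw_c, hlw_p⟩ := ellK_spec hw
  obtain ⟨LD, hLD_c, hLD_p, hLD_len⟩ := exists_factorization hk w hw1
  have hm : ellK k u + ellK k (u⁻¹ * w) = ellK k w := hle
  have hle1 : ellK k w ≤ LD.length := by
    have := ellK_le hLD_c
    rwa [hLD_p] at this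
  -- cycQ w = K - k * LD.length
  have hciw : cycQ w = (w.cycleType.card : ℚ) + K - w.support.card := cycQ_eq w
  have hLDq : (k : ℚ) * LD.length + w.cycleType.card = w.support.card := by
    exact_mod_cast hLD_len
  have hcw : cycQ w = K - k * LD.length := by linarith
  -- lower bound via lw
  have h1 : (K : ℚ) - k * (ellK k w) ≤ cycQ w := by
    have := cycQ_prod_ge lw hlw_c 1
    rwa [one_mul, cycQ_one, hlw_p, hlw_len] at this
  have hkQ : (0 : ℚ) < k := by exact_mod_cast hk
  have hLDm : (LD.length : ℚ) = ellK k w := by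
    have h2 : (ellK k w : ℚ) ≤ LD.length := by exact_mod_cast hle1
    have h3 : (k : ℚ) * LD.length ≤ k * ellK k w := by linarith
    have h4 : (k : ℚ) * ellK k w ≤ k * LD.length :=
      mul_le_mul_of_nonneg_left h2 hkQ.le
    exact mul_left_cancel₀ (ne_of_gt hkQ) (le_antisymm h3 h4)
  have hcw' : cycQ w = K - k * ellK k w := by rw [hcw, hLDm]
  -- bounds for u and u⁻¹w
  have hB1 : (K : ℚ) - k * (ellK k u) ≤ cycQ u := by
    have := cycQ_prod_ge lu hlu_c 1
    rwa [one_mul, cycQ_one, hlu_p, hlu_len] at this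
  have hB2 : (K : ℚ) - k * (ellK k (u⁻¹ * w)) ≤ cycQ (u⁻¹ * w) := by
    have := cycQ_prod_ge lv hlv_c 1
    rwa [one_mul, cycQ_one, hlv_p, hlv_len] at this
  have hC1 : cycQ u - k * (ellK k (u⁻¹ * w)) ≤ cycQ w := by
    have := cycQ_prod_ge lv hlv_c u
    rwa [hlv_p, hlv_len, mul_inv_cancel_left] at this
  have hC2 : cycQ (u⁻¹ * w) - k * (ellK k u) ≤ cycQ w := by
    obtain ⟨hic, hip⟩ := inv_list hlu_c
    have := cycQ_prod_ge _ hic ((u⁻¹ * w)⁻¹)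
    rw [hip, hlu_p] at this
    have hinv : (u⁻¹ * w)⁻¹ * u⁻¹ = w⁻¹ := by group
    rw [hinv, cycQ_inv, cycQ_inv] at this
    have hlen : ((lu.map (fun s => s⁻¹)).reverse).length = ellK k u := by
      simp [hlu_len]
    rwa [hlen] at this
  have hmQ : (ellK k u : ℚ) + (ellK k (u⁻¹ * w)) = ellK k w := by exact_mod_cast hm
  have hkm : (k : ℚ) * ellK k w = k * ellK k u + k * ellK k (u⁻¹ * w) := by
    rw [← hmQ]; ring
  have hcu : cycQ u = K - k * ellK k u := by linarith
  have hcv : cycQ (u⁻¹ * w) = K - k * ellK k (u⁻¹ * w) := by linarith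
  refine ⟨?_, ?_, ?_⟩
  · rw [om_iff]
    have := OM_of_list hk lu hlu_c (by rw [hlu_p, hlu_len]; exact hcu)
    rwa [hlu_p] at this
  · show ellK k (u⁻¹ * w) + ellK k ((u⁻¹ * w)⁻¹ * w) = ellK k w
    have h2 : ellK k ((u⁻¹ * w)⁻¹ * w) = ellK k u := by
      rw [show (u⁻¹ * w)⁻¹ * w = w⁻¹ * u * w by group]
      exact ellK_conj w u
    rw [h2]
    omega
  · rw [om_iff]
    have := OM_of_list hk lv hlv_c (by rw [hlv_p, hlv_len]; exact hcv)
    rwa [hlv_p] at this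
end

section
/- Fix integers k, n ≥ 1 and set N = kn+1. For every permutation w of {1,...,N}, if w ≤_k c_N then the Kreweras complement w⁻¹c_N also satisfies w⁻¹c_N ≤_k c_N; that is, NC_{N;k} is stable under Kreweras complementation. -/
lemma isKCycle_conj {k N : ℕ} (g t : Equiv.Perm (Fin N)) (h : IsKCycle k t) :
    IsKCycle k (g * t * g⁻¹) :=
  ⟨h.1.conj, by rw [Equiv.Perm.card_support_conj]; exact h.2⟩

lemma ellK_set_conj {k N : ℕ} (g w : Equiv.Perm (Fin N)) (m : ℕ)
    (hm : m ∈ {m | ∃ l : List (Equiv.Perm (Fin N)),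
      l.length = m ∧ (∀ t ∈ l, IsKCycle k t) ∧ l.prod = w}) :
    m ∈ {m | ∃ l : List (Equiv.Perm (Fin N)),
      l.length = m ∧ (∀ t ∈ l, IsKCycle k t) ∧ l.prod = g * w * g⁻¹} := by
  obtain ⟨l, hlen, hcyc, hprod⟩ := hm
  refine ⟨l.map (fun t => g * t * g⁻¹), by simp [hlen], ?_, ?_⟩
  · intro t ht
    simp only [List.mem_map] at ht
    obtain ⟨s, hs, rfl⟩ := ht
    exact isKCycle_conj g s (hcyc s hs)
  · have he : (fun t : Equiv.Perm (Fin N) => g * t * g⁻¹)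
        = ((MulAut.conj g).toMonoidHom : Equiv.Perm (Fin N) →* Equiv.Perm (Fin N)) := by
      funext t; simp [MulAut.conj]
    rw [he, ← MonoidHom.map_list_prod, hprod]
    simp [MulAut.conj]

lemma ellK_conj {k N : ℕ} (g w : Equiv.Perm (Fin N)) :
    ellK k (g * w * g⁻¹) = ellK k w := by
  unfold ellK
  congr 1
  apply Set.eq_of_subset_of_subset
  · intro m hm
    have := ellK_set_conj g⁻¹ (g * w * g⁻¹) m hm
    simpa [mul_assoc] using this
  · exact fun m hm => ellK_set_conj g w m hm

/-- Corollary 3.3: `NC_{N;k}` is stable under Kreweras complementation: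
`w ≤_k c_N` implies `w⁻¹ c_N ≤_k c_N`. -/
theorem kreweras_stable (k n : ℕ) (hk : 1 ≤ k) (hn : 1 ≤ n)
    (N : ℕ) (hN : N = k * n + 1) (w : Equiv.Perm (Fin N))
    (hw : absLe k w (finRotate N)) :
    absLe k (w⁻¹ * finRotate N) (finRotate N) := by
  unfold absLe at *
  have key : ellK k ((w⁻¹ * finRotate N)⁻¹ * finRotate N) = ellK k w := by
    have h1 : (w⁻¹ * finRotate N)⁻¹ * finRotate N
        = (finRotate N)⁻¹ * w * ((finRotate N)⁻¹)⁻¹ := by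
      group
    rw [h1, ellK_conj]
  rw [key]
  omega
end

section
/- Fix integers k, n ≥ 1 and set N = kn+1. The number of order ideals (downward-closed subsets) of the poset Δ_{N;k} equals (2/(N+1))·binomial(N+n, n); equivalently, (N+1) times the number of order ideals equals 2·binomial(N+n, n). -/
/-- the underlying set of the poset `Δ_{N;k}`:
pairs `(a,b)` with `1 ≤ a < b ≤ N-k+1` and `a ≡ 1 (mod k)`. -/
def DeltaSet (N k : ℕ) : Set (ℤ × ℤ) :=
  {p | 1 ≤ p.1 ∧ p.1 < p.2 ∧ p.2 ≤ (N : ℤ) - (k : ℤ) + 1 ∧ p.1 % (k : ℤ) = 1 % (k : ℤ)}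

set_option linter.unusedSectionVars false


/-- Number of sequences `(e₁,…,eₙ)` of naturals with `e₁ ≤ m` and `eᵢ₊₁ ≤ eᵢ + k`. -/
def Fcnt (k : ℕ) : ℕ → ℕ → ℕ
  | 0, _ => 1
  | n+1, m => ∑ a ∈ Finset.range (m+1), Fcnt k n (a+k)

lemma Fcnt_succ_zero (k n : ℕ) : Fcnt k (n+1) 0 = Fcnt k n k := by
  simp [Fcnt]

lemma Fcnt_succ_succ (k n m : ℕ) :
    Fcnt k (n+1) (m+1) = Fcnt k (n+1) m + Fcnt k n (m+1+k) := by
  show (∑ a ∈ Finset.range (m+2), Fcnt k n (a+k)) = _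
  rw [Finset.sum_range_succ]
  rfl

lemma Fcnt_formula (k : ℕ) : ∀ n m : ℕ,
    (k*n + m + 1) * Fcnt k n m = (m+1) * Nat.choose ((k+1)*n + m) n := by
  intro n
  induction n with
  | zero => intro m; simp [Fcnt]
  | succ n ih =>
    intro m
    induction m with
    | zero =>
      rw [Fcnt_succ_zero]
      have key : (k+1) * Nat.choose ((k+1)*n + k) n
          = Nat.choose ((k+1)*n + k + 1) (n+1) := by
        have h2 := Nat.add_one_mul_choose_eq ((k+1)*n + k) n
        apply Nat.eq_of_mul_eq_mul_left (show 0 < n+1 by omega)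
        calc (n+1) * ((k+1) * Nat.choose ((k+1)*n+k) n)
            = ((k+1)*n+k+1) * Nat.choose ((k+1)*n+k) n := by ring
          _ = Nat.choose ((k+1)*n+k+1) (n+1) * (n+1) := by
              simpa [Nat.succ_eq_add_one] using h2
          _ = (n+1) * Nat.choose ((k+1)*n+k+1) (n+1) := by ring
      have e1 : k*(n+1)+0+1 = k*n+k+1 := by ring
      have e2 : (k+1)*(n+1)+0 = (k+1)*n+k+1 := by ring
      rw [e1, e2, ih k, key]
      omega
    | succ m ihm =>
      have r1 : (k+1)*(n+1) = k*n + k + n + 1 := by ring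
      have r2 : (k+1)*n = k*n + n := by ring
      have r3 : k*(n+1) = k*n + k := by ring
      -- abbreviations (as equalities, not `set`)
      have e4 : (k+1)*n + (m+1+k) = (k+1)*(n+1)+m := by omega
      have hB' : (k*(n+1)+m+1+1) * Fcnt k n (m+1+k)
          = (m+k+2) * Nat.choose ((k+1)*(n+1)+m) n := by
        have hB := ih (m+1+k)
        have e3 : k*n + (m+1+k) + 1 = k*(n+1)+m+1+1 := by omega
        have e5 : (m+1+k)+1 = m+k+2 := by omega
        rw [e3, e4, e5] at hB; exact hB
      have h3 : Nat.choose ((k+1)*(n+1)+m) (n+1) * (n+1)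
          = Nat.choose ((k+1)*(n+1)+m) n * (k*(n+1)+m+1) := by
        have := Nat.choose_succ_right_eq ((k+1)*(n+1)+m) n
        have hXn : (k+1)*(n+1)+m - n = k*(n+1)+m+1 := by omega
        rw [hXn] at this; exact this
      have star : Fcnt k (n+1) m + k * Nat.choose ((k+1)*(n+1)+m) n
          = Nat.choose ((k+1)*(n+1)+m) (n+1) := by
        apply Nat.eq_of_mul_eq_mul_left (show 0 < k*(n+1)+m+1 by omega)
        have hA : (k*(n+1)+m+1) * Fcnt k (n+1) m
            = (m+1) * Nat.choose ((k+1)*(n+1)+m) (n+1) := ihm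
        nlinarith [hA, h3]
      have pascal : Nat.choose ((k+1)*(n+1)+m+1) (n+1)
          = Nat.choose ((k+1)*(n+1)+m) n + Nat.choose ((k+1)*(n+1)+m) (n+1) :=
        Nat.choose_succ_succ ((k+1)*(n+1)+m) n
      have e6 : (k+1)*(n+1)+(m+1) = (k+1)*(n+1)+m+1 := by omega
      rw [Fcnt_succ_succ, e6, pascal]
      have hA : (k*(n+1)+m+1) * Fcnt k (n+1) m
          = (m+1) * Nat.choose ((k+1)*(n+1)+m) (n+1) := ihm
      nlinarith [hA, hB', star]


def seqs (k : ℕ) : ℕ → ℕ → Finset (List ℕ)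
  | 0, _ => {[]}
  | n+1, m => (Finset.range (m+1)).biUnion fun a => (seqs k n (a+k)).image (a :: ·)

lemma card_seqs (k : ℕ) : ∀ n m : ℕ, (seqs k n m).card = Fcnt k n m := by
  intro n
  induction n with
  | zero => intro m; rfl
  | succ n ih =>
    intro m
    show ((Finset.range (m+1)).biUnion fun a => (seqs k n (a+k)).image (a :: ·)).card
      = ∑ a ∈ Finset.range (m+1), Fcnt k n (a+k)
    rw [Finset.card_biUnion]
    · exact Finset.sum_congr rfl fun a _ => by
        rw [Finset.card_image_of_injective _ (fun x y h => by injection h), ih]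
    · intro a _ b _ hab
      simp only [Finset.disjoint_left, Finset.mem_image]
      rintro l ⟨x, _, rfl⟩ ⟨y, _, h⟩
      injection h with h1 _
      exact hab h1.symm

/-- `Good k m l` : head of `l` is at most `m` and successive entries grow by at most `k`. -/
def Good (k m : ℕ) (l : List ℕ) : Prop :=
  (∀ h ∈ l.head?, h ≤ m) ∧ l.Chain' (fun a b => b ≤ a + k)

lemma mem_seqs (k : ℕ) : ∀ n m (l : List ℕ),
    l ∈ seqs k n m ↔ l.length = n ∧ Good k m l := by
  intro n
  induction n with
  | zero =>
    intro m l
    constructor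
    · intro h
      have : l = [] := by simpa [seqs] using h
      subst this
      exact ⟨rfl, by simp [Good], by simp [List.Chain']⟩
    · rintro ⟨h, -⟩
      have : l = [] := List.length_eq_zero_iff.mp h
      simp [this, seqs]
  | succ n ih =>
    intro m l
    show l ∈ (Finset.range (m+1)).biUnion _ ↔ _
    simp only [Finset.mem_biUnion, Finset.mem_range, Finset.mem_image]
    constructor
    · rintro ⟨a, ha, t, ht, rfl⟩
      obtain ⟨hlen, hhead, hchain⟩ := (ih (a+k) t).mp ht
      refine ⟨by simp [hlen], ?_, ?_⟩
      · intro h hh; simp at hh; omega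
      · rw [List.Chain', List.isChain_cons]
        exact ⟨fun b hb => hhead b hb, hchain⟩
    · rintro ⟨hlen, hhead, hchain⟩
      match l with
      | [] => simp at hlen
      | a :: t =>
        rw [List.Chain', List.isChain_cons] at hchain
        refine ⟨a, ?_, t, (ih (a+k) t).mpr ⟨by simpa using hlen, hchain.1, hchain.2⟩, rfl⟩
        have := hhead a (by simp)
        omega

def aIx (k n j : ℕ) : ℤ := (k:ℤ) * ((n:ℤ) - 1 - (j:ℤ)) + 1

lemma chain'_getD {k : ℕ} {l : List ℕ}
    (hc : l.Chain' (fun a b => b ≤ a + k)) :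
    ∀ i j : ℕ, i ≤ j → j < l.length → l.getD j 0 ≤ l.getD i 0 + k * (j - i) := by
  intro i j hij hj
  induction j, hij using Nat.le_induction with
  | base => simp
  | succ j hij ihj =>
    have hj' : j < l.length := by omega
    have step : l.getD (j+1) 0 ≤ l.getD j 0 + k := by
      rw [List.getD_eq_getElem l 0 hj, List.getD_eq_getElem l 0 hj']
      have := List.isChain_iff_getElem.mp hc j (by omega)
      simpa [List.get_eq_getElem] using this
    have := ihj hj'
    have harith : k * (j + 1 - i) = k * (j - i) + k := by
      have : j + 1 - i = (j - i) + 1 := by omega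
      rw [this]; ring
    omega

lemma aIx_lt (k n : ℕ) {j j' : ℕ} (hk : 1 ≤ k) (h : j' ≤ j) :
    aIx k n j ≤ aIx k n j' := by
  unfold aIx
  have : (j':ℤ) ≤ (j:ℤ) := by exact_mod_cast h
  have hk' : (1:ℤ) ≤ (k:ℤ) := by exact_mod_cast hk
  nlinarith

lemma aIx_le_imp (k n : ℕ) {j j' : ℕ} (hk : 1 ≤ k) (hle : aIx k n j ≤ aIx k n j') :
    j' ≤ j := by
  by_contra h
  push_neg at h
  have := aIx_lt k n hk (show j ≤ j' by omega)
  have heq : aIx k n j = aIx k n j' := le_antisymm hle this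
  unfold aIx at heq
  have hk' : (0:ℤ) < (k:ℤ) := by exact_mod_cast hk
  have : ((n:ℤ) - 1 - j) = ((n:ℤ) - 1 - j') := by
    have := mul_left_cancel₀ (ne_of_gt hk') (by linarith : (k:ℤ) * ((n:ℤ)-1-j) = (k:ℤ) * ((n:ℤ)-1-j'))
    exact this
  omega

lemma aIx_inj (k n : ℕ) {j j' : ℕ} (hk : 1 ≤ k)
    (h : aIx k n j = aIx k n j') : j = j' :=
  le_antisymm (aIx_le_imp k n hk h.ge) (aIx_le_imp k n hk h.le)

lemma aIx_pos (k n : ℕ) {j : ℕ} (hj : j < n) : 1 ≤ aIx k n j := by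
  unfold aIx
  have : (0:ℤ) ≤ (k:ℤ) * ((n:ℤ) - 1 - (j:ℤ)) := by
    apply mul_nonneg (by positivity)
    have : (j:ℤ) < (n:ℤ) := by exact_mod_cast hj
    omega
  omega

lemma aIx_mod (k n j : ℕ) : aIx k n j % (k:ℤ) = 1 % (k:ℤ) := by
  unfold aIx
  rw [add_comm]
  exact Int.add_mul_emod_self_left 1 (k:ℤ) ((n:ℤ) - 1 - (j:ℤ))

lemma aIx_diff (k n : ℕ) {j j' : ℕ} : aIx k n j' - aIx k n j = (k:ℤ) * ((j:ℤ) - (j':ℤ)) := by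
  unfold aIx; ring

/-- classification of first coordinates in the Delta set -/
lemma exists_aIx (k n N : ℕ) (hk : 1 ≤ k) (hN : N = k*n+1)
    {q : ℤ × ℤ} (hq1 : 1 ≤ q.1) (hq2 : q.1 < q.2) (hq3 : q.2 ≤ (N:ℤ) - k + 1)
    (hq4 : q.1 % (k:ℤ) = 1 % (k:ℤ)) :
    ∃ j < n, q.1 = aIx k n j := by
  have hk' : (0:ℤ) < (k:ℤ) := by exact_mod_cast hk
  have hNZ : (N:ℤ) = (k:ℤ)*(n:ℤ) + 1 := by rw [hN]; push_cast; ring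
  have hdvd : (k:ℤ) ∣ q.1 - 1 := by
    have hmod : Int.ModEq (k:ℤ) 1 q.1 := (show Int.ModEq (k:ℤ) q.1 1 from hq4).symm
    exact hmod.dvd
  obtain ⟨s, hs⟩ := hdvd
  have hs0 : 0 ≤ s := by nlinarith
  have hsn : s ≤ (n:ℤ) - 1 := by
    have hup : q.1 ≤ (N:ℤ) - k := by omega
    have : (k:ℤ) * s ≤ (k:ℤ) * ((n:ℤ) - 1) := by nlinarith
    exact le_of_mul_le_mul_left this hk'
  refine ⟨n - 1 - s.toNat, by omega, ?_⟩
  unfold aIx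
  have h1 : (s.toNat : ℤ) = s := Int.toNat_of_nonneg hs0
  have h2 : s.toNat ≤ n - 1 := by omega
  have h3 : ((n - 1 - s.toNat : ℕ) : ℤ) = (n:ℤ) - 1 - s := by omega
  rw [h3]
  have h4 : (n:ℤ) - 1 - ((n:ℤ) - 1 - s) = s := by ring
  rw [h4]
  omega

def Phi (k n : ℕ) (l : List ℕ) : Set (ℤ × ℤ) :=
  {p | ∃ j < n, p.1 = aIx k n j ∧ p.1 < p.2 ∧ p.2 ≤ p.1 + (l.getD j 0 : ℤ)}

section Bij
variable {k n N : ℕ} (hk : 1 ≤ k) (hn : 1 ≤ n) (hN : N = k*n+1)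

/-- entries of a good list are bounded -/
lemma entry_bound {l : List ℕ} (hl : l ∈ seqs k n 1) {j : ℕ} (hj : j < n) :
    l.getD j 0 ≤ 1 + k * j := by
  obtain ⟨hlen, hhead, hchain⟩ := (mem_seqs k n 1 l).mp hl
  have hpos : 0 < l.length := by omega
  have h0 : l.getD 0 0 ≤ 1 := by
    cases l with
    | nil => simp at hpos
    | cons a t => exact hhead a rfl
  have h2 := chain'_getD hchain 0 j (by omega) (by omega)
  simp only [Nat.sub_zero] at h2
  omega

include hk hn hN in
lemma phi_subset {l : List ℕ} (hl : l ∈ seqs k n 1) :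
    Phi k n l ⊆ DeltaSet N k := by
  rintro p ⟨j, hj, h1, h2, h3⟩
  have hb := entry_bound hl hj
  refine ⟨h1 ▸ aIx_pos k n hj, h2, ?_, h1 ▸ aIx_mod k n j⟩
  have hNZ : (N:ℤ) = (k:ℤ)*(n:ℤ) + 1 := by rw [hN]; push_cast; ring
  have hbz : (l.getD j 0 : ℤ) ≤ 1 + (k:ℤ) * (j:ℤ) := by exact_mod_cast hb
  have hjz : (j:ℤ) ≤ (n:ℤ) - 1 := by
    have : (j:ℤ) < (n:ℤ) := by exact_mod_cast hj
    omega
  have : p.2 ≤ aIx k n j + (l.getD j 0 : ℤ) := by rw [← h1]; exact h3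
  unfold aIx at this
  have hkz : (0:ℤ) ≤ (k:ℤ) := by positivity
  nlinarith

include hk hn hN in
lemma phi_ideal {l : List ℕ} (hl : l ∈ seqs k n 1) :
    ∀ p ∈ Phi k n l, ∀ q ∈ DeltaSet N k, p.1 ≤ q.1 → q.2 ≤ p.2 → q ∈ Phi k n l := by
  rintro p ⟨j, hj, h1, h2, h3⟩ q ⟨hq1, hq2, hq3, hq4⟩ hpq1 hpq2
  obtain ⟨j', hj', hje⟩ := exists_aIx k n N hk hN hq1 hq2 hq3 hq4
  have hjj : j' ≤ j := aIx_le_imp k n hk (by rw [← h1, ← hje]; exact hpq1)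
  refine ⟨j', hj', hje, hq2, ?_⟩
  obtain ⟨hlen, hhead, hchain⟩ := (mem_seqs k n 1 l).mp hl
  have hgd := chain'_getD hchain j' j hjj (by omega)
  have hdiff : aIx k n j' - aIx k n j = (k:ℤ) * ((j:ℤ) - (j':ℤ)) := aIx_diff k n
  have hgdz : (l.getD j 0 : ℤ) ≤ (l.getD j' 0 : ℤ) + (k:ℤ) * ((j:ℤ) - (j':ℤ)) := by
    have : (l.getD j 0 : ℤ) ≤ (l.getD j' 0 : ℤ) + ((k * (j - j') : ℕ) : ℤ) := by
      exact_mod_cast hgd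
    have hc : ((k * (j - j') : ℕ) : ℤ) = (k:ℤ) * ((j:ℤ) - (j':ℤ)) := by
      push_cast [Nat.cast_sub hjj]
      ring
    omega
  calc q.2 ≤ p.2 := hpq2
    _ ≤ p.1 + (l.getD j 0 : ℤ) := h3
    _ = aIx k n j + (l.getD j 0 : ℤ) := by rw [h1]
    _ ≤ aIx k n j' - (k:ℤ) * ((j:ℤ) - (j':ℤ)) + ((l.getD j' 0 : ℤ) + (k:ℤ) * ((j:ℤ) - (j':ℤ))) := by
        omega
    _ = q.1 + (l.getD j' 0 : ℤ) := by rw [← hje]; ring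

include hk in
lemma phi_mem_iff {l : List ℕ} {j : ℕ} (hj : j < n) (t : ℤ) :
    ((aIx k n j, aIx k n j + t) : ℤ × ℤ) ∈ Phi k n l ↔ 1 ≤ t ∧ t ≤ (l.getD j 0 : ℤ) := by
  constructor
  · rintro ⟨j2, hj2, he, hlt, hle⟩
    have : j2 = j := (aIx_inj k n hk he).symm
    subst this
    simp only at hlt hle
    constructor <;> omega
  · rintro ⟨ht1, ht2⟩
    exact ⟨j, hj, rfl, by omega, by omega⟩

include hk in
lemma phi_inj {l l' : List ℕ} (hl : l ∈ seqs k n 1) (hl' : l' ∈ seqs k n 1)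
    (h : Phi k n l = Phi k n l') : l = l' := by
  obtain ⟨hlen, -⟩ := (mem_seqs k n 1 l).mp hl
  obtain ⟨hlen', -⟩ := (mem_seqs k n 1 l').mp hl'
  have key : ∀ l1 l2 : List ℕ, l1 ∈ seqs k n 1 → l2 ∈ seqs k n 1 →
      Phi k n l1 = Phi k n l2 → ∀ j, j < n → l1.getD j 0 ≤ l2.getD j 0 := by
    intro l1 l2 _ _ hP j hj
    by_cases h0 : l1.getD j 0 = 0
    · omega
    · have hmem : ((aIx k n j, aIx k n j + (l1.getD j 0 : ℤ)) : ℤ × ℤ) ∈ Phi k n l1 :=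
        (phi_mem_iff hk hj _).mpr ⟨by exact_mod_cast Nat.one_le_iff_ne_zero.mpr h0, le_refl _⟩
      rw [hP] at hmem
      have := ((phi_mem_iff hk hj _).mp hmem).2
      exact_mod_cast this
  apply List.ext_getElem (by omega)
  intro j hj1 hj2
  have h1 := key l l' hl hl' h j (by omega)
  have h2 := key l' l hl' hl h.symm j (by omega)
  rw [List.getD_eq_getElem l 0 hj1, List.getD_eq_getElem l' 0 hj2] at h1 h2
  omega

end Bij

section Surj
variable {k n N : ℕ} (hk : 1 ≤ k) (hn : 1 ≤ n) (hN : N = k*n+1)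

include hk hn hN in
lemma phi_surj {I : Set (ℤ × ℤ)} (hsub : I ⊆ DeltaSet N k)
    (hid : ∀ p ∈ I, ∀ q ∈ DeltaSet N k, p.1 ≤ q.1 → q.2 ≤ p.2 → q ∈ I) :
    ∃ l ∈ seqs k n 1, Phi k n l = I := by
  classical
  have hNZ : (N:ℤ) = (k:ℤ)*(n:ℤ) + 1 := by rw [hN]; push_cast; ring
  set e : ℕ → ℕ := fun j =>
    ((Finset.Icc (aIx k n j + 1) ((N:ℤ) - k + 1)).filter
      (fun b => ((aIx k n j, b) : ℤ×ℤ) ∈ I)).card with he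
  have key : ∀ j, j < n → ∀ b : ℤ,
      ((aIx k n j, b) : ℤ×ℤ) ∈ I ↔ (aIx k n j < b ∧ b ≤ aIx k n j + (e j : ℤ)) := by
    intro j hj
    set a := aIx k n j with ha
    set s := (Finset.Icc (a + 1) ((N:ℤ) - k + 1)).filter
      (fun b => ((a, b) : ℤ×ℤ) ∈ I) with hs
    have hmem_s : ∀ b : ℤ, b ∈ s ↔ (a + 1 ≤ b ∧ b ≤ (N:ℤ) - k + 1 ∧ ((a, b) : ℤ×ℤ) ∈ I) := by
      intro b
      simp [hs, Finset.mem_filter, Finset.mem_Icc, and_assoc]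
    have hIs : ∀ b : ℤ, ((a, b) : ℤ×ℤ) ∈ I → b ∈ s := by
      intro b hb
      obtain ⟨d1, d2, d3, d4⟩ := hsub hb
      exact (hmem_s b).mpr ⟨by omega, d3, hb⟩
    have hclosed : ∀ b ∈ s, ∀ b' : ℤ, a < b' → b' ≤ b → b' ∈ s := by
      intro b hb b' h1 h2
      obtain ⟨m1, m2, m3⟩ := (hmem_s b).mp hb
      have hq : ((a, b') : ℤ×ℤ) ∈ DeltaSet N k :=
        ⟨aIx_pos k n hj, h1, by omega, aIx_mod k n j⟩
      exact hIs b' (hid (a, b) m3 (a, b') hq (le_refl a) h2)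
    rcases s.eq_empty_or_nonempty with hemp | hne
    · have he0 : e j = 0 := by
        show s.card = 0
        simp [hemp]
      intro b
      rw [he0]
      constructor
      · intro hb
        exact absurd (hIs b hb) (by simp [hemp])
      · intro hb
        push_cast at hb
        omega
    · set b0 := s.max' hne with hb0
      have hb0s : b0 ∈ s := s.max'_mem hne
      have hb0a : a + 1 ≤ b0 := ((hmem_s b0).mp hb0s).1
      have hseq : s = Finset.Icc (a+1) b0 := by
        apply Finset.ext
        intro b
        rw [Finset.mem_Icc]
        constructor
        · intro hb
          exact ⟨((hmem_s b).mp hb).1, s.le_max' b hb⟩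
        · rintro ⟨h1, h2⟩
          exact hclosed b0 hb0s b (by omega) h2
      have hcard : (e j : ℤ) = b0 - a := by
        show ((s.card : ℤ)) = b0 - a
        rw [hseq, Int.card_Icc]
        rw [Int.toNat_of_nonneg (by omega)]
        ring
      intro b
      constructor
      · intro hb
        have := (hmem_s b).mp (hIs b hb)
        have hble : b ≤ b0 := by
          have := hseq ▸ (hIs b hb)
          exact (Finset.mem_Icc.mp this).2
        refine ⟨by omega, by omega⟩
      · rintro ⟨h1, h2⟩
        have hb : b ∈ s := by
          rw [hseq, Finset.mem_Icc]
          omega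
        exact ((hmem_s b).mp hb).2.2
  have ehead : e 0 ≤ 1 := by
    have hM : (N:ℤ) - k + 1 = aIx k n 0 + 1 := by
      unfold aIx
      push_cast
      have : (1:ℤ) ≤ (n:ℤ) := by exact_mod_cast hn
      rw [hNZ]; ring
    show ((Finset.Icc (aIx k n 0 + 1) ((N:ℤ) - k + 1)).filter
        (fun b => ((aIx k n 0, b) : ℤ×ℤ) ∈ I)).card ≤ 1
    rw [hM]
    calc ((Finset.Icc (aIx k n 0 + 1) (aIx k n 0 + 1)).filter
        (fun b => ((aIx k n 0, b) : ℤ×ℤ) ∈ I)).card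
        ≤ (Finset.Icc (aIx k n 0 + 1) (aIx k n 0 + 1)).card := Finset.card_filter_le _ _
      _ = 1 := by rw [Int.card_Icc]; omega
  have echain : ∀ j, j + 1 < n → e (j+1) ≤ e j + k := by
    intro j hj
    by_cases hc : e (j+1) ≤ k
    · omega
    · push_neg at hc
      have hj' : j < n := by omega
      have haj : aIx k n j = aIx k n (j+1) + k := by
        unfold aIx; push_cast; ring
      have he1 : (1:ℤ) ≤ (e (j+1) : ℤ) := by exact_mod_cast (show 1 ≤ e (j+1) by omega)
      have hkz : (k:ℤ) < (e (j+1) : ℤ) := by exact_mod_cast hc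
      have hb1 : ((aIx k n (j+1), aIx k n (j+1) + (e (j+1) : ℤ)) : ℤ×ℤ) ∈ I :=
        (key (j+1) hj _).mpr ⟨by omega, le_refl _⟩
      have hq : ((aIx k n j, aIx k n (j+1) + (e (j+1) : ℤ)) : ℤ×ℤ) ∈ DeltaSet N k :=
        ⟨aIx_pos k n hj', by rw [haj]; omega, (hsub hb1).2.2.1, aIx_mod k n j⟩
      have hIb : ((aIx k n j, aIx k n (j+1) + (e (j+1) : ℤ)) : ℤ×ℤ) ∈ I := by
        refine hid _ hb1 _ hq ?_ (le_refl _)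
        show aIx k n (j+1) ≤ aIx k n j
        rw [haj]
        have : (0:ℤ) ≤ (k:ℤ) := by positivity
        omega
      have hfin := ((key j hj' _).mp hIb).2
      rw [haj] at hfin
      have : (e (j+1) : ℤ) ≤ (k:ℤ) + (e j : ℤ) := by omega
      exact_mod_cast (by push_cast at this ⊢; omega : (e (j+1) : ℤ) ≤ ((e j + k : ℕ) : ℤ))
  -- construct the list
  refine ⟨List.ofFn (fun i : Fin n => e i), ?_, ?_⟩
  · rw [mem_seqs]
    have hlen : (List.ofFn (fun i : Fin n => e i)).length = n := by simp
    refine ⟨hlen, ?_, ?_⟩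
    · intro h hh
      obtain ⟨n', rfl⟩ : ∃ n', n = n' + 1 := ⟨n-1, by omega⟩
      rw [List.ofFn_succ] at hh
      simp at hh
      omega
    · rw [List.Chain', List.isChain_iff_getElem]
      intro i hi
      simp only [List.get_eq_getElem, List.getElem_ofFn]
      have hi' : i + 1 < n := by
        rw [hlen] at hi
        omega
      have := echain i hi'
      simpa using this
  · apply Set.ext
    intro p
    constructor
    · rintro ⟨j, hj, h1, h2, h3⟩
      have hg : (List.ofFn (fun i : Fin n => e i)).getD j 0 = e j := by
        rw [List.getD_eq_getElem _ 0 (by simp; omega)]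
        simp
      rw [hg] at h3
      have hpI : ((aIx k n j, p.2) : ℤ×ℤ) ∈ I := (key j hj p.2).mpr ⟨by omega, by omega⟩
      have hpe : p = (aIx k n j, p.2) := by
        rw [Prod.ext_iff]
        exact ⟨h1, rfl⟩
      rw [hpe]; exact hpI
    · intro hp
      obtain ⟨d1, d2, d3, d4⟩ := hsub hp
      obtain ⟨j, hj, hje⟩ := exists_aIx k n N hk hN d1 d2 d3 d4
      have hpI : ((aIx k n j, p.2) : ℤ×ℤ) ∈ I := by
        have hpe : p = (aIx k n j, p.2) := by
          rw [Prod.ext_iff]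
          exact ⟨hje, rfl⟩
        rw [← hpe]; exact hp
      have hub := ((key j hj p.2).mp hpI).2
      have hg : (List.ofFn (fun i : Fin n => e i)).getD j 0 = e j := by
        rw [List.getD_eq_getElem _ 0 (by simp; omega)]
        simp
      exact ⟨j, hj, hje, d2, by rw [hg, hje]; omega⟩

end Surj

/-- Theorem 6.1: the number of order ideals of `Δ_{N;k}` (the `k`-indivisible
nonnesting partitions) is `(2/(N+1)) C(N+n, n)`.  Recall `(a,b) ⪯ (c,d)` iff
`a ≥ c` and `b ≤ d`. -/
theorem card_nonnesting (k n : ℕ) (hk : 1 ≤ k) (hn : 1 ≤ n)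
    (N : ℕ) (hN : N = k * n + 1) :
    (N + 1) * Nat.card {I : Set (ℤ × ℤ) // I ⊆ DeltaSet N k ∧
        ∀ p ∈ I, ∀ q ∈ DeltaSet N k, p.1 ≤ q.1 → q.2 ≤ p.2 → q ∈ I} =
      2 * (N + n).choose n := by
  have hcard : Nat.card {I : Set (ℤ × ℤ) // I ⊆ DeltaSet N k ∧
      ∀ p ∈ I, ∀ q ∈ DeltaSet N k, p.1 ≤ q.1 → q.2 ≤ p.2 → q ∈ I}
      = (seqs k n 1).card := by
    have hb : Function.Bijective (fun l : {l // l ∈ seqs k n 1} =>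
        (⟨Phi k n l.1, phi_subset hk hn hN l.2, phi_ideal hk hn hN l.2⟩ :
          {I : Set (ℤ × ℤ) // I ⊆ DeltaSet N k ∧
            ∀ p ∈ I, ∀ q ∈ DeltaSet N k, p.1 ≤ q.1 → q.2 ≤ p.2 → q ∈ I})) := by
      constructor
      · rintro ⟨l, hl⟩ ⟨l', hl'⟩ hhe
        simp only [Subtype.mk.injEq] at hhe
        exact Subtype.ext (phi_inj hk hl hl' hhe)
      · rintro ⟨I, hsub, hid⟩
        obtain ⟨l, hl, hPhi⟩ := phi_surj hk hn hN hsub hid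
        exact ⟨⟨l, hl⟩, Subtype.ext hPhi⟩
    rw [← Nat.card_eq_of_bijective _ hb, Nat.card_eq_finsetCard]
  rw [hcard, card_seqs]
  have hF := Fcnt_formula k n 1
  have e1 : N + 1 = k*n + 1 + 1 := by omega
  have e2 : N + n = (k+1)*n + 1 := by rw [hN]; ring
  rw [e1, e2]
  simpa using hF
end

section
/- For all integers n > 2 and k ≥ 1, the following identity of rational numbers holds: Ran(n, k+1, 2) = Σ_{i=1}^{n−1} (−1)^{i+1} · binomial((n−i)k+2, i) · Ran(n−i, k+1, 2). -/
/-- the Raney number `Ran(n, p, r) = (r/(np+r)) C(np+r, n)`, as a rational number. -/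
def Ran (n p r : ℕ) : ℚ :=
  (r : ℚ) / ((n : ℚ) * p + r) * (((n * p + r).choose n : ℕ) : ℚ)

lemma ran_zero (p r : ℕ) (hr : 1 ≤ r) : Ran 0 p r = 1 := by
  have hr' : (r:ℚ) ≠ 0 := Nat.cast_ne_zero.mpr (by omega)
  simp [Ran, div_self, hr']

lemma ran_r_zero (n p : ℕ) : Ran n p 0 = 0 := by simp [Ran]

lemma ran_rec (n p r : ℕ) (hp : 1 ≤ p) :
    Ran (n+1) p (r+1) = Ran (n+1) p r + Ran n p (p+r) := by
  have h1 : (n+1) * p + (r+1) = ((n+1)*p + r) + 1 := by omega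
  have h2 : n * p + (p + r) = (n+1)*p + r := by ring
  have F1 : ((((n+1)*p+r) + 1).choose (n+1) : ℚ)
      = (((n+1)*p+r).choose n : ℚ) + (((n+1)*p+r).choose (n+1) : ℚ) := by
    rw [Nat.choose_succ_succ]
    push_cast
    ring
  have F2 : ((((n+1)*p+r) : ℚ)+1) * (((n+1)*p+r).choose n : ℚ)
      = ((n:ℚ)+1) * ((((n+1)*p+r) + 1).choose (n+1) : ℚ) := by
    have h := Nat.add_one_mul_choose_eq ((n+1)*p+r) n
    have h' : ((n+1)*p+r+1) * (((n+1)*p+r).choose n) = (((n+1)*p+r+1).choose (n+1)) * (n+1) := by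
      simpa [Nat.succ_eq_add_one] using h
    have h2 : ((((n+1)*p+r+1) * (((n+1)*p+r).choose n) : ℕ) : ℚ)
        = (((((n+1)*p+r+1).choose (n+1)) * (n+1) : ℕ) : ℚ) := by exact_mod_cast h'
    push_cast at h2
    linarith [h2]
  have hs : (((n+1)*p+r : ℕ) : ℚ) ≠ 0 := Nat.cast_ne_zero.mpr (by nlinarith)
  have hs1 : (((n+1)*p+r : ℕ) : ℚ) + 1 ≠ 0 := by positivity
  unfold Ran
  rw [h1, h2]
  push_cast at F1 F2 hs hs1 ⊢
  field_simp
  linear_combination (((n:ℚ)+1)*p+r) * (((r:ℚ)+1)*(((n:ℚ)+1)*p+r)) * F1 - (((n:ℚ)+1)*p+r) * (p:ℚ) * F2 - (p:ℚ)*((n:ℚ)+1)*(((n:ℚ)+1)*p+r) * F1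

/-- `Ran` with the convention `Rh 0 p r = 1` even when `r = 0`. -/
def Rh (n p r : ℕ) : ℚ := if n = 0 then 1 else Ran n p r

lemma rh_eq_ran (n p r : ℕ) (hr : 1 ≤ r) : Rh n p r = Ran n p r := by
  unfold Rh
  split
  · subst ‹n = 0›; exact (ran_zero p r hr).symm
  · rfl

lemma rh_rec (n p r : ℕ) (hp : 1 ≤ p) :
    Rh n p (r+1) = Rh n p r + (if n = 0 then 0 else Rh (n-1) p (p+r)) := by
  match n with
  | 0 => simp [Rh]
  | Nat.succ m =>
    have e : ∀ s, Rh (m+1) p s = Ran (m+1) p s := fun s => if_neg (Nat.succ_ne_zero m)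
    rw [if_neg (Nat.succ_ne_zero m), Nat.succ_sub_one, e, e,
      rh_eq_ran m p (p+r) (by omega)]
    exact ran_rec m p r hp

/-- the alternating convolution. -/
def W (k n r : ℕ) : ℚ :=
  ∑ m ∈ Finset.range (n+1),
    Rh m (k+1) r * (-1)^(n-m) * (((m*k + r).choose (n-m) : ℕ) : ℚ)

lemma W_zero (k r : ℕ) : W k 0 r = 1 := by
  simp [W, Rh]

lemma W_r_zero (k n : ℕ) : W k (n+1) 0 = 0 := by
  unfold W
  apply Finset.sum_eq_zero
  intro m hm
  rcases Nat.eq_zero_or_pos m with h | h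
  · subst h
    have : (0 * k + 0).choose (n+1-0) = 0 := Nat.choose_eq_zero_of_lt (by omega)
    simp [this]
  · unfold Rh
    rw [if_neg (by omega)]
    simp [ran_r_zero]

lemma W_rec (k n r : ℕ) :
    W k (n+1) (r+1) = W k (n+1) r - W k n r + W k n (k+1+r) := by
  have split : W k (n+1) (r+1) =
      (∑ m ∈ Finset.range (n+2),
        Rh m (k+1) r * (-1)^(n+1-m) * (((m*k + (r+1)).choose (n+1-m) : ℕ) : ℚ))
      + (∑ m ∈ Finset.range (n+2),
        (if m = 0 then 0 else Rh (m-1) (k+1) (k+1+r)) * (-1)^(n+1-m)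
          * (((m*k + (r+1)).choose (n+1-m) : ℕ) : ℚ)) := by
    rw [W, ← Finset.sum_add_distrib]
    apply Finset.sum_congr rfl
    intro m _
    rw [rh_rec m (k+1) r (by omega)]
    ring
  have s2 : (∑ m ∈ Finset.range (n+2),
        (if m = 0 then 0 else Rh (m-1) (k+1) (k+1+r)) * (-1)^(n+1-m)
          * (((m*k + (r+1)).choose (n+1-m) : ℕ) : ℚ)) = W k n (k+1+r) := by
    rw [Finset.sum_range_succ']
    simp only [if_true, eq_self_iff_true, if_pos, zero_mul, add_zero, reduceIte]
    rw [W]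
    apply Finset.sum_congr rfl
    intro i _
    rw [if_neg (Nat.succ_ne_zero i), Nat.succ_sub_one,
      show n+1-(i+1) = n-i from by omega,
      show (i+1)*k + (r+1) = i*k + (k+1+r) from by ring]
  have s1 : (∑ m ∈ Finset.range (n+2),
        Rh m (k+1) r * (-1)^(n+1-m) * (((m*k + (r+1)).choose (n+1-m) : ℕ) : ℚ))
      = W k (n+1) r - W k n r := by
    rw [W, W, Finset.sum_range_succ, Finset.sum_range_succ
      (f := fun m => Rh m (k+1) r * (-1)^(n+1-m) * (((m*k + r).choose (n+1-m) : ℕ) : ℚ))]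
    have key : ∀ m ∈ Finset.range (n+1),
        Rh m (k+1) r * (-1)^(n+1-m) * (((m*k + (r+1)).choose (n+1-m) : ℕ) : ℚ)
        = Rh m (k+1) r * (-1)^(n+1-m) * (((m*k + r).choose (n+1-m) : ℕ) : ℚ)
          - Rh m (k+1) r * (-1)^(n-m) * (((m*k + r).choose (n-m) : ℕ) : ℚ) := by
      intro m hm
      have hmn : m ≤ n := by simpa using Nat.lt_succ_iff.mp (Finset.mem_range.mp hm)
      have h1 : n+1-m = (n-m)+1 := by omega
      have h2 : m*k + (r+1) = (m*k+r)+1 := by omega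
      rw [h1, h2, Nat.choose_succ_succ]
      push_cast
      ring
    rw [Finset.sum_congr rfl key, Finset.sum_sub_distrib]
    simp only [Nat.sub_self, pow_zero, Nat.choose_zero_right, Nat.cast_one]
    ring
  rw [split, s2, s1]

lemma W_vanish (k : ℕ) : ∀ n r, W k (n+1) r = 0 := by
  intro n
  induction n with
  | zero =>
    intro r
    induction r with
    | zero => exact W_r_zero k 0
    | succ r ih => rw [W_rec, ih, W_zero, W_zero]; ring
  | succ n ihn =>
    intro r
    induction r with
    | zero => exact W_r_zero k (n+1)
    | succ r ih => rw [W_rec, ih, ihn r, ihn (k+1+r)]; ring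

/-- Corollary 6.2: for `n > 2` and `k ≥ 1`,
`Ran(n, k+1, 2) = Σ_{i=1}^{n-1} (-1)^(i+1) C((n-i)k+2, i) Ran(n-i, k+1, 2)`. -/
theorem raney_recursion (n k : ℕ) (hn : 2 < n) (hk : 1 ≤ k) :
    Ran n (k + 1) 2 =
      ∑ i ∈ Finset.Icc 1 (n - 1),
        (-1 : ℚ) ^ (i + 1) * (((n - i) * k + 2).choose i : ℕ) * Ran (n - i) (k + 1) 2 := by
  obtain ⟨N, rfl⟩ : ∃ N, n = N + 3 := ⟨n - 3, by omega⟩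
  have h0 : W k (N+3) 2 = 0 := W_vanish k (N+2) 2
  have hW : (0:ℚ) = ∑ i ∈ Finset.range (N+3+1),
      Rh (N+3-i) (k+1) 2 * (-1)^i * (((N+3-i)*k+2).choose i : ℕ) := by
    rw [← h0, W, ← Finset.sum_range_reflect
      (fun m => Rh m (k+1) 2 * (-1)^(N+3-m) * (((m*k+2).choose (N+3-m) : ℕ) : ℚ)) (N+3+1)]
    apply Finset.sum_congr rfl
    intro i hi
    have hin : i ≤ N+3 := Nat.lt_succ_iff.mp (Finset.mem_range.mp hi)
    rw [show N+3+1-1-i = N+3-i from by omega, show N+3-(N+3-i) = i from by omega]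
  rw [Finset.sum_range_succ, Finset.sum_range_succ'] at hW
  have hlast : Rh (N+3-(N+3)) (k+1) 2 * (-1)^(N+3) * (((N+3-(N+3))*k+2).choose (N+3) : ℕ) = 0 := by
    rw [show N+3-(N+3) = 0 from by omega, show 0*k+2 = 2 from by ring,
      Nat.choose_eq_zero_of_lt (by omega)]
    simp
  have hfirst : Rh (N+3-0) (k+1) 2 * (-1)^0 * (((N+3-0)*k+2).choose 0 : ℕ)
      = Ran (N+3) (k+1) 2 := by
    rw [Nat.choose_zero_right]
    simp [Rh]
  rw [hlast, hfirst, add_zero] at hW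
  rw [show (N+3-1 : ℕ) = N+2 from by omega, ← Finset.Ico_add_one_right_eq_Icc, Finset.sum_Ico_eq_sum_range,
    show (N+2+1-1 : ℕ) = N+2 from by omega]
  have hsum : ∑ i ∈ Finset.range (N+2),
      ((-1:ℚ)^(1+i+1) * ((((N+3) - (1+i))*k+2).choose (1+i) : ℕ) * Ran ((N+3)-(1+i)) (k+1) 2
        + Rh (N+3-(i+1)) (k+1) 2 * (-1)^(i+1) * (((N+3-(i+1))*k+2).choose (i+1) : ℕ)) = 0 := by
    apply Finset.sum_eq_zero
    intro i hi
    have hiN : i < N+2 := Finset.mem_range.mp hi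
    have hne : N+3-(i+1) ≠ 0 := by omega
    have h1i : 1+i = i+1 := by omega
    rw [h1i]
    unfold Rh
    rw [if_neg hne, pow_succ, pow_succ]
    ring
  rw [Finset.sum_add_distrib] at hsum
  linarith [hW, hsum]
end
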